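/- arXiv:1703.10521 — 11 statements merged into one kernel-verified Lean document; each statement's English description precedes it below -/
import Mathlib

section
/- Let $F$ be a flat (filtering) covariant functor from the one-object category with endomorphism monoid $(\mathcal{O}_K,\times)$ (for $\mathcal{O}_K$ a commutative integral domain) to Sets, and let $X = F(\star)$. Then the binary operation on $X$ defined by $x + \tilde{x} := F(u+v)z$, where $z \in X$ and $u,v \in \mathcal{O}_K$ satisfy $F(u)z = x$ and $F(v)z = \tilde{x}$, is well defined, i.e., independent of the choice of $u, v, z$. -/
/-- well-definedness of the addition induced on `X = F(⋆)` by a flat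
covariant functor `F` from the one-object category of the multiplicative monoid of an
integral domain `𝒪_K` to Sets. -/
theorem stmt0 {R : Type*} [CommRing R] [IsDomain R] {X : Type*}
    (F : R → X → X) (hF1 : ∀ x, F 1 x = x)
    (hFmul : ∀ a b x, F (a * b) x = F a (F b x))
    (hflat1 : Nonempty X)
    (hflat2 : ∀ a b : X, ∃ (u v : R) (z : X), F u z = a ∧ F v z = b)
    (hflat3 : ∀ (u v : R) (a : X), F u a = F v a →
      ∃ (w : R) (z : X), F w z = a ∧ u * w = v * w)
    (x x' : X) (u v u' v' : R) (z z' : X)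
    (hu : F u z = x) (hv : F v z = x') (hu' : F u' z' = x) (hv' : F v' z' = x') :
    F (u + v) z = F (u' + v') z' := by
  obtain ⟨s, t, w, hs, ht⟩ := hflat2 z z'
  have h1 : F (u * s) w = F (u' * t) w := by
    simp only [hFmul, hs, ht, hu, hu']
  obtain ⟨c, w1, hc, hc2⟩ := hflat3 (u * s) (u' * t) w h1
  have h2 : F (v * s * c) w1 = F (v' * t * c) w1 := by
    simp only [hFmul, hc, hs, ht, hv, hv']
  obtain ⟨d, w2, hd, hd2⟩ := hflat3 (v * s * c) (v' * t * c) w1 h2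
  have hz : z = F (s * (c * d)) w2 := by simp only [hFmul, hd, hc, hs]
  have hz' : z' = F (t * (c * d)) w2 := by simp only [hFmul, hd, hc, ht]
  have key : (u + v) * (s * (c * d)) = (u' + v') * (t * (c * d)) := by
    have e1 : u * s * c * d = u' * t * c * d := by rw [hc2]
    have e2 : v * s * c * d = v' * t * c * d := by
      rw [mul_assoc (v*s), mul_assoc (v'*t)] at hd2
      rw [mul_assoc (v*s), mul_assoc (v'*t), hd2]
    ring_nf
    ring_nf at e1 e2
    linear_combination e1 + e2
  rw [hz, hz', ← hFmul, ← hFmul, key]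
end

section
/- Let $F$ be a flat covariant functor from the one-object multiplicative category of a commutative integral domain $\mathcal{O}_K$ to Sets, and let $X = F(\star)$ equipped with the addition $x + \tilde{x} := F(u+v)z$ (where $F(u)z=x$, $F(v)z=\tilde{x}$). Then $(X,+)$ is an abelian group with neutral element $0_X := F(0)x$ for any $x \in X$, and the inverse of $x = F(a)z$ (with $F(0)z = 0_X$) given by $-x := F(-a)z$. -/
/-- for a flat covariant functor `F` from the one-object multiplicative
category of an integral domain `𝒪_K` to Sets, the induced addition on `X = F(⋆)`
(characterized by `F u z + F v z = F (u+v) z`) makes `X` an abelian group, with neutral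
element `0_X = F 0 x` (for any `x`) and inverse of `F a z` given by `F (-a) z`. -/
theorem stmt1 {R : Type*} [CommRing R] [IsDomain R] {X : Type*}
    (F : R → X → X) (hF1 : ∀ x, F 1 x = x)
    (hFmul : ∀ a b x, F (a * b) x = F a (F b x))
    (hflat1 : Nonempty X)
    (hflat2 : ∀ a b : X, ∃ (u v : R) (z : X), F u z = a ∧ F v z = b)
    (hflat3 : ∀ (u v : R) (a : X), F u a = F v a →
      ∃ (w : R) (z : X), F w z = a ∧ u * w = v * w)
    (add : X → X → X)
    (hAdd : ∀ (u v : R) (z : X), add (F u z) (F v z) = F (u + v) z) :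
    (∀ x y : X, add x y = add y x) ∧
    (∀ x y w : X, add (add x y) w = add x (add y w)) ∧
    (∀ x y : X, F 0 x = F 0 y) ∧
    (∀ x y : X, add (F 0 y) x = x) ∧
    (∀ (a : R) (z : X), add (F a z) (F (-a) z) = F 0 z) := by
  have hzero : ∀ (u : R) (z : X), F 0 (F u z) = F 0 z := by
    intro u z
    rw [← hFmul, zero_mul]
  refine ⟨?_, ?_, ?_, ?_, ?_⟩
  · intro x y
    obtain ⟨u, v, z, hx, hy⟩ := hflat2 x y
    rw [← hx, ← hy, hAdd, hAdd, add_comm]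
  · intro x y w
    obtain ⟨u, v, z1, hx, hy⟩ := hflat2 x y
    obtain ⟨p, q, z, hz1, hw⟩ := hflat2 z1 w
    subst hz1
    have hx' : x = F (u * p) z := by rw [hFmul, hx]
    have hy' : y = F (v * p) z := by rw [hFmul, hy]
    rw [hx', hy', ← hw, hAdd, hAdd, hAdd, hAdd, add_assoc]
  · intro x y
    obtain ⟨u, v, z, hx, hy⟩ := hflat2 x y
    rw [← hx, ← hy, hzero, hzero]
  · intro x y
    obtain ⟨u, v, z, hx, hy⟩ := hflat2 x y
    have h0 : F 0 y = F 0 z := by rw [← hy, hzero]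
    rw [h0, ← hx, hAdd, zero_add]
  · intro a z
    rw [hAdd, add_neg_cancel]
end

section
/- Let $K$ be the fraction field of a principal ideal domain $\mathcal{O}_K$, and let $F$ be a flat covariant functor from the one-object multiplicative category of $\mathcal{O}_K$ to Sets. Then the $\mathcal{O}_K$-module $X = F(\star)$ is isomorphic to an $\mathcal{O}_K$-submodule of $K$. Concretely, if $X \neq \{0_X\}$ then for any $x \in X \setminus \{0_X\}$ the map $j_{X,x}: X \to K$ sending $\tilde{x}$ to $\tilde{k}/k$, where $x = F(k)z$ and $\tilde{x} = F(\tilde{k})z$ for some $z \in X$, is a well-defined injective $\mathcal{O}_K$-linear map. -/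
/-- for `𝒪_K` a PID with fraction field `K` and `F` a flat covariant functor
from its one-object multiplicative category to Sets, the `𝒪_K`-module `X = F(⋆)` embeds
into `K`: if `X ≠ {0_X}` then for any nonzero `x ∈ X` the map `j_{X,x}` sending
`x' = F k' z` (with `x = F k z`) to `k'/k ∈ K` is a well-defined injective
`𝒪_K`-linear map. -/
theorem stmt3 {R : Type*} [CommRing R] [IsDomain R] [IsPrincipalIdealRing R] {X : Type*}
    (F : R → X → X) (hF1 : ∀ x, F 1 x = x)
    (hFmul : ∀ a b x, F (a * b) x = F a (F b x))
    (hflat1 : Nonempty X)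
    (hflat2 : ∀ a b : X, ∃ (u v : R) (z : X), F u z = a ∧ F v z = b)
    (hflat3 : ∀ (u v : R) (a : X), F u a = F v a →
      ∃ (w : R) (z : X), F w z = a ∧ u * w = v * w)
    (add : X → X → X)
    (hAdd : ∀ (u v : R) (z : X), add (F u z) (F v z) = F (u + v) z)
    (smul : R → X → X)
    (hSmul : ∀ (α u : R) (z : X), smul α (F u z) = F (α * u) z)
    (x : X) (hx : x ≠ F 0 x) :
    ∃ j : X → FractionRing R,
      (∀ (x' : X) (k k' : R) (z : X), F k z = x → F k' z = x' →
        j x' = algebraMap R (FractionRing R) k' / algebraMap R (FractionRing R) k) ∧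
      Function.Injective j ∧
      (∀ (lam : R) (a b : X),
        j (add (smul lam a) b) = algebraMap R (FractionRing R) lam * j a + j b) := by
  classical
  set φ := algebraMap R (FractionRing R) with hφ
  have hφinj : Function.Injective φ := IsFractionRing.injective R (FractionRing R)
  have hφne : ∀ r : R, r ≠ 0 → φ r ≠ 0 := by
    intro r hr h
    exact hr (hφinj (h.trans (map_zero φ).symm))
  -- F 0 is constant
  have hzero : ∀ a b : X, F 0 a = F 0 b := by
    intro a b
    obtain ⟨u, v, z, ha, hb⟩ := hflat2 a b
    rw [← ha, ← hb, ← hFmul, ← hFmul, zero_mul, zero_mul]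
  have hne : ∀ (u : R) (z : X), F u z = x → u ≠ 0 := by
    intro u z h hu
    subst hu
    exact hx ((h.symm).trans (hzero z x))
  choose u v z hu hv using hflat2 x
  -- well-definedness: the chosen fraction agrees with any representation
  have wd : ∀ (x' : X) (k k' : R) (z' : X), F k z' = x → F k' z' = x' →
      φ (v x') / φ (u x') = φ k' / φ k := by
    intro x' k k' z' hk hk'
    obtain ⟨p, q, t, hp, hq⟩ := hflat2 z' (z x')
    have h1 : F (k * p) t = F (u x' * q) t := by
      simp only [hFmul, hp, hq]
      rw [hk, hu]
    obtain ⟨w, s, hws, hcanc⟩ := hflat3 _ _ _ h1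
    have h2 : F (k' * p * w) s = F (v x' * q * w) s := by
      simp only [hFmul, hws, hp, hq]
      rw [hk', hv]
    obtain ⟨w2, s2, hw2, hcanc2⟩ := hflat3 _ _ _ h2
    have hxrep : F (k * p * w * w2) s2 = x := by
      simp only [hFmul, hw2, hws, hp]
      exact hk
    have hnz : k * p * w * w2 ≠ 0 := hne _ _ hxrep
    have e1 : k' * p * w * w2 = v x' * q * w * w2 := by
      linear_combination hcanc2
    have e2 : k * p * w * w2 = u x' * q * w * w2 := by
      linear_combination w2 * hcanc
    have hqnz : q * w * w2 ≠ 0 := by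
      intro h
      apply hnz
      linear_combination e2 + u x' * h
    have key : v x' * k = k' * u x' := by
      apply mul_right_cancel₀ hqnz
      linear_combination k' * e2 - k * e1
    rw [div_eq_div_iff (hφne _ (hne _ _ (hu x'))) (hφne _ (hne _ _ hk)),
      ← map_mul, ← map_mul]
    exact congrArg φ key
  refine ⟨fun x' => φ (v x') / φ (u x'), ?_, ?_, ?_⟩
  · exact fun x' k k' z' hk hk' => wd x' k k' z' hk hk'
  · -- injectivity
    intro a b hab
    have hcross : v a * u b = v b * u a := by
      apply hφinj
      rw [map_mul, map_mul]
      have := hab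
      rw [div_eq_div_iff (hφne _ (hne _ _ (hu a))) (hφne _ (hne _ _ (hu b)))] at this
      exact this
    obtain ⟨p, q, t, hp, hq⟩ := hflat2 (z a) (z b)
    have h1 : F (u a * p) t = F (u b * q) t := by
      simp only [hFmul, hp, hq]
      rw [hu, hu]
    obtain ⟨w, s, hws, hcanc⟩ := hflat3 _ _ _ h1
    have hkey : v a * p * w = v b * q * w := by
      apply mul_left_cancel₀ (hne _ _ (hu a))
      linear_combination v a * hcanc + q * w * hcross
    calc a = F (v a * p * w) s := by simp only [hFmul, hws, hp]; rw [hv]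
      _ = F (v b * q * w) s := by rw [hkey]
      _ = b := by simp only [hFmul, hws, hq]; rw [hv]
  · -- linearity
    intro lam a b
    obtain ⟨p, q, t, hp, hq⟩ := hflat2 (z a) b
    have hxrep : F (u a * p) t = x := by rw [hFmul, hp, hu]
    have harep : F (v a * p) t = a := by rw [hFmul, hp, hv]
    have h5 := hSmul lam (v a * p) t
    rw [harep] at h5
    have hsum := hAdd (lam * (v a * p)) q t
    rw [← h5, hq] at hsum
    have hj1 := wd (add (smul lam a) b) _ _ t hxrep hsum.symm
    have hj2 := wd a _ _ t hxrep harep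
    have hj3 := wd b _ _ t hxrep hq
    show φ (v (add (smul lam a) b)) / φ (u (add (smul lam a) b)) =
      φ lam * (φ (v a) / φ (u a)) + φ (v b) / φ (u b)
    rw [hj1, hj2, hj3, map_add, map_mul, add_div, mul_div_assoc]
end

section
/- Let $\mathcal{O}_K$ be a principal ideal domain with fraction field $K$ and let $X$ be an $\mathcal{O}_K$-submodule of $K$. Then the functor $F$ from the one-object multiplicative category of $\mathcal{O}_K$ to Sets, sending $\star$ to $X$ and $\lambda \in \mathcal{O}_K$ to multiplication by $\lambda$ on $X$, is flat: in particular, for any $x, y \in X$ there exist $u, v \in \mathcal{O}_K$ and $z \in X$ with $x = uz$ and $y = vz$. -/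
/-- for `𝒪_K` a PID with fraction field `K` and `X` an `𝒪_K`-submodule of
`K`, the functor sending `⋆` to `X` and `λ ∈ 𝒪_K` to multiplication by `λ` on `X` is
flat, i.e. it satisfies the three filtering conditions. -/
theorem stmt4 {R : Type*} [CommRing R] [IsDomain R] [IsPrincipalIdealRing R]
    (X : Submodule R (FractionRing R)) :
    Nonempty X ∧
    (∀ x ∈ X, ∀ y ∈ X, ∃ (u v : R) (z : FractionRing R),
      z ∈ X ∧ x = u • z ∧ y = v • z) ∧
    (∀ (u v : R), ∀ a ∈ X, u • a = v • a →
      ∃ (w : R) (z : FractionRing R), z ∈ X ∧ w • z = a ∧ u * w = v * w) := by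
  set K := FractionRing R
  set i : R →+* K := algebraMap R K with hi
  have hinj : Function.Injective i := IsFractionRing.injective R K
  refine ⟨⟨0, X.zero_mem⟩, ?_, ?_⟩
  · intro x hx y hy
    obtain ⟨⟨a, s⟩, hxs⟩ := IsLocalization.mk'_surjective (nonZeroDivisors R) x
    obtain ⟨⟨b, t⟩, hyt⟩ := IsLocalization.mk'_surjective (nonZeroDivisors R) y
    set p := a * (t : R)
    set q := b * (s : R)
    have hd0 : i ((s : R) * t) ≠ 0 := by
      have : ((s : R) * t) ∈ nonZeroDivisors R := mul_mem s.2 t.2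
      exact IsFractionRing.to_map_ne_zero_of_mem_nonZeroDivisors this
    have hsx : i s * x = i a := by
      rw [← hxs]; exact IsLocalization.mk'_spec' _ a s
    have hty : i t * y = i b := by
      rw [← hyt]; exact IsLocalization.mk'_spec' _ b t
    have hxp : i ((s : R) * t) * x = i p := by
      simp only [map_mul, p]
      rw [mul_comm (i s) (i t), mul_assoc, hsx, mul_comm]
    have hyq : i ((s : R) * t) * y = i q := by
      simp only [map_mul, q]
      rw [mul_assoc, hty, mul_comm]
    obtain ⟨g, hg⟩ := (IsPrincipalIdealRing.principal (Ideal.span {p, q} : Ideal R)).principal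
    have hp : p ∈ Submodule.span R ({g} : Set R) := by
      rw [← hg]; exact Ideal.subset_span (by simp)
    have hq : q ∈ Submodule.span R ({g} : Set R) := by
      rw [← hg]; exact Ideal.subset_span (by simp)
    obtain ⟨u, hu⟩ := Ideal.mem_span_singleton'.mp hp
    obtain ⟨v, hv⟩ := Ideal.mem_span_singleton'.mp hq
    have hgmem : g ∈ Ideal.span ({p, q} : Set R) := by
      rw [hg]; exact Ideal.subset_span (by simp)
    obtain ⟨c1, c2, hc⟩ := Ideal.mem_span_pair.mp hgmem
    refine ⟨u, v, c1 • x + c2 • y, X.add_mem (X.smul_mem _ hx) (X.smul_mem _ hy), ?_, ?_⟩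
    · apply mul_left_cancel₀ hd0
      have : i ((s : R) * t) * (u • (c1 • x + c2 • y)) =
          i u * (i c1 * (i ((s : R) * t) * x) + i c2 * (i ((s : R) * t) * y)) := by
        simp [Algebra.smul_def, hi]; ring
      rw [this, hxp, hyq, ← map_mul, ← map_mul, ← map_add, hc, ← map_mul, hu]
    · apply mul_left_cancel₀ hd0
      have : i ((s : R) * t) * (v • (c1 • x + c2 • y)) =
          i v * (i c1 * (i ((s : R) * t) * x) + i c2 * (i ((s : R) * t) * y)) := by
        simp [Algebra.smul_def, hi]; ring
      rw [this, hxp, hyq, ← map_mul, ← map_mul, ← map_add, hc, ← map_mul, hv]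
  · intro u v a ha h
    by_cases ha0 : a = 0
    · exact ⟨0, 0, X.zero_mem, by simp [ha0], by simp⟩
    · have huv : u = v := by
        have : (i u - i v) * a = 0 := by
          rw [sub_mul, sub_eq_zero, ← Algebra.smul_def, ← Algebra.smul_def]; exact h
        rcases mul_eq_zero.mp this with h' | h'
        · exact hinj (sub_eq_zero.mp h')
        · exact absurd h' ha0
      exact ⟨1, a, ha, one_smul _ _, by rw [huv]⟩
end

section
/- Let $K$ be a number field and $J$ a closed $\mathcal{O}_K$-submodule (equivalently, closed ideal) of $\widetilde{\mathcal{O}_K} = \prod_{\mathfrak{p}} \mathcal{O}_{\mathfrak{p}}$. For each prime $\mathfrak{p}$, the projection $\pi_{\mathfrak{p}}(J) \subseteq \mathcal{O}_{\mathfrak{p}}$ equals the intersection $(\{0\} \times \mathcal{O}_{\mathfrak{p}}) \cap J$ and is a closed ideal $J_{\mathfrak{p}}$ of $\mathcal{O}_{\mathfrak{p}}$; moreover, $x \in J$ if and only if $\pi_{\mathfrak{p}}(x) \in J_{\mathfrak{p}}$ for all primes $\mathfrak{p}$. -/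
noncomputable section

namespace DedekindDomain

open IsDedekindDomain

variable (R K : Type*) [CommRing R] [IsDedekindDomain R] [Field K] [Algebra R K]
  [IsFractionRing R K]

/-- The finite integral adèles `∏_v R_v` (removed from Mathlib; restored with its old meaning). -/
def FiniteIntegralAdeles : Type _ :=
  ∀ v : HeightOneSpectrum R, v.adicCompletionIntegers K

instance : CommRing (FiniteIntegralAdeles R K) :=
  inferInstanceAs (CommRing (∀ v : HeightOneSpectrum R, v.adicCompletionIntegers K))

instance : TopologicalSpace (FiniteIntegralAdeles R K) :=
  inferInstanceAs (TopologicalSpace (∀ v : HeightOneSpectrum R, v.adicCompletionIntegers K))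

instance : Inhabited (FiniteIntegralAdeles R K) :=
  inferInstanceAs (Inhabited (∀ v : HeightOneSpectrum R, v.adicCompletionIntegers K))

instance : Algebra R (FiniteIntegralAdeles R K) :=
  inferInstanceAs (Algebra R (∀ v : HeightOneSpectrum R, v.adicCompletionIntegers K))

end DedekindDomain

end

open NumberField DedekindDomain IsDedekindDomain

local notation "ℤₘ₀" => WithZero (Multiplicative ℤ)

section Aux

open IsDedekindDomain.HeightOneSpectrum
open scoped Multiplicative

set_option synthInstance.maxHeartbeats 1000000
set_option maxHeartbeats 1600000

variable {R : Type*} [CommRing R] [IsDedekindDomain R] {K : Type*} [Field K]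
  [Algebra R K] [IsFractionRing R K]

lemma aux_rep (v : HeightOneSpectrum R) (k : K) (hk : v.valuation K k ≤ 1) :
    ∃ (w t : R), t ∉ v.asIdeal ∧ (algebraMap R K t) * k = algebraMap R K w := by
  obtain ⟨n, ⟨d, hd⟩, hnd⟩ := exists_primeCompl_mul_eq_of_integer v k hk
  exact ⟨n, d, hd, by rw [mul_comm]; exact hnd⟩

lemma aux_approx (v : HeightOneSpectrum R) (k : K) (hk : v.valuation K k ≤ 1) (n : ℕ) :
    ∃ a : R, v.valuation K (k - algebraMap R K a) ≤ Multiplicative.ofAdd (-(n : ℤ)) := by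
  obtain ⟨w, t, htp, heq⟩ := aux_rep v k hk
  have hmax : v.asIdeal.IsMaximal := v.isPrime.isMaximal v.ne_bot
  have h1 : IsCoprime (Ideal.span {t}) v.asIdeal := by
    rw [Ideal.isCoprime_iff_sup_eq, Ideal.eq_top_iff_one]
    obtain ⟨y, i, hi, hyi⟩ := hmax.exists_inv htp
    rw [← hyi]
    exact Submodule.add_mem_sup (Ideal.mem_span_singleton'.mpr ⟨y, rfl⟩) hi
  have h2 : Ideal.span {t} ⊔ v.asIdeal ^ n = ⊤ :=
    Ideal.isCoprime_iff_sup_eq.mp (h1.pow_right)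
  have h3 : (1 : R) ∈ Ideal.span {t} ⊔ v.asIdeal ^ n := by rw [h2]; trivial
  obtain ⟨x, hx, y, hy, hxy⟩ := Submodule.mem_sup.mp h3
  obtain ⟨u, hu⟩ := Ideal.mem_span_singleton'.mp hx
  have hyut : (1 : R) - u * t = y := by rw [← hxy, hu]; ring
  refine ⟨u * w, ?_⟩
  have hk_eq : k - algebraMap R K (u * w) = k * algebraMap R K (1 - u * t) := by
    rw [map_sub, map_one, map_mul, map_mul, ← heq]; ring
  rw [hk_eq, Valuation.map_mul]
  have hval : v.valuation K (algebraMap R K (1 - u * t)) ≤ Multiplicative.ofAdd (-(n : ℤ)) := by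
    rw [valuation_of_algebraMap]
    refine (v.intValuation_le_pow_iff_dvd _ n).mpr ?_
    rw [Ideal.dvd_span_singleton, hyut]
    exact hy
  exact le_trans (mul_le_mul' hk hval) (by rw [one_mul])

lemma aux_dense (v : HeightOneSpectrum R) (x : v.adicCompletion K) (hx : Valued.v x ≤ 1)
    (n : ℕ) :
    ∃ a : R, Valued.v (x - algebraMap R (v.adicCompletion K) a) ≤
      (Multiplicative.ofAdd (-(n : ℤ)) : Multiplicative ℤ) := by
  set γ : ℤₘ₀ˣ := Units.mk0 ((Multiplicative.ofAdd (-(n : ℤ)) : Multiplicative ℤ) : ℤₘ₀)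
    WithZero.coe_ne_zero with hγ
  have hU : {y : v.adicCompletion K | Valued.v (y - x) < γ} ∈ nhds x := by
    obtain ⟨z0, hz0⟩ := valuedAdicCompletion_surjective K v (γ : ℤₘ₀)
    have hball : IsOpen {z : v.adicCompletion K | Valued.v z < γ} := by
      have := Valued.isOpen_ball (v.adicCompletion K) (Valued.v.restrict z0)
      convert this using 2 with z
      simp only [Set.mem_setOf_eq, Valuation.restrict_lt_iff, hz0]
    refine (hball.preimage (continuous_id.sub continuous_const)).mem_nhds ?_
    simp
  have hd : x ∈ closure (Set.range ((↑) : K → v.adicCompletion K)) := by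
    rw [show Set.range ((↑) : K → v.adicCompletion K) = Set.range (algebraMap K (v.adicCompletion K)) from rfl]
    rw [(denseRange_algebraMap K v).closure_range]
    trivial
  obtain ⟨y, hyU, k, rfl⟩ := mem_closure_iff_nhds.mp hd _ hU
  have hky : Valued.v ((k : v.adicCompletion K) - x) < γ := hyU
  have hγ1 : (γ : ℤₘ₀) ≤ 1 := by
    rw [hγ]
    simp only [Units.val_mk0, ← WithZero.coe_one, WithZero.coe_le_coe, ← ofAdd_zero,
      Multiplicative.ofAdd_le]
    omega
  have hk1 : v.valuation K k ≤ 1 := by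
    rw [← valuedAdicCompletion_eq_valuation']
    calc Valued.v ((k : v.adicCompletion K))
        = Valued.v (((k : v.adicCompletion K) - x) + x) := by rw [sub_add_cancel]
      _ ≤ max (Valued.v ((k : v.adicCompletion K) - x)) (Valued.v x) :=
          Valuation.map_add_le_max' _ _ _
      _ ≤ 1 := max_le (le_trans hky.le hγ1) hx
  obtain ⟨a, ha⟩ := aux_approx v k hk1 n
  refine ⟨a, ?_⟩
  have hmap : algebraMap R (v.adicCompletion K) a = ((algebraMap R K a : K) : v.adicCompletion K) := by
    rw [IsScalarTower.algebraMap_apply R K (v.adicCompletion K)]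
    rfl
  have key : x - algebraMap R (v.adicCompletion K) a =
      (x - (k : v.adicCompletion K)) + ((k - algebraMap R K a : K) : v.adicCompletion K) := by
    rw [hmap]
    have hs : ((k - algebraMap R K a : K) : v.adicCompletion K) =
        (k : v.adicCompletion K) - ((algebraMap R K a : K) : v.adicCompletion K) :=
      map_sub (algebraMap K (v.adicCompletion K)) k _
    rw [hs]
    ring
  have h1 : Valued.v (x - (k : v.adicCompletion K)) ≤
      ((Multiplicative.ofAdd (-(n : ℤ)) : Multiplicative ℤ) : ℤₘ₀) := by
    rw [Valuation.map_sub_swap]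
    exact hky.le
  have h2 : Valued.v (((k - algebraMap R K a : K) : v.adicCompletion K)) ≤
      ((Multiplicative.ofAdd (-(n : ℤ)) : Multiplicative ℤ) : ℤₘ₀) := by
    rw [valuedAdicCompletion_eq_valuation']
    exact ha
  rw [key]
  exact le_trans (Valuation.map_add_le_max' _ _ _) (max_le h1 h2)


lemma aux_exists_nat' (Γ : ℤₘ₀ˣ) :
    ∃ n : ℕ, ((Multiplicative.ofAdd (-(n:ℤ)) : Multiplicative ℤ) : ℤₘ₀) < Γ := by
  obtain ⟨m, hm⟩ := WithZero.ne_zero_iff_exists.mp Γ.ne_zero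
  refine ⟨((-Multiplicative.toAdd m).toNat + 1), ?_⟩
  rw [← hm, WithZero.coe_lt_coe, ← Multiplicative.toAdd_lt, toAdd_ofAdd]
  have := Int.self_le_toNat (-Multiplicative.toAdd m)
  push_cast
  omega

lemma aux_nhds (v : HeightOneSpectrum R) (p : v.adicCompletionIntegers K)
    (t : Set (v.adicCompletionIntegers K)) (ht : t ∈ nhds p) :
    ∃ n : ℕ, ∀ q : v.adicCompletionIntegers K,
      Valued.v ((q : v.adicCompletion K) - (p : v.adicCompletion K)) ≤
        ((Multiplicative.ofAdd (-(n:ℤ)) : Multiplicative ℤ) : ℤₘ₀) → q ∈ t := by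
  rw [mem_nhds_subtype] at ht
  obtain ⟨u, hu, hut⟩ := ht
  obtain ⟨Γ, hΓ⟩ := Valued.mem_nhds.mp hu
  obtain ⟨n, hn⟩ := WithZero.exists_exp_neg_natCast_lt
    (x := MonoidWithZeroHom.ValueGroup₀.embedding Γ.1) ((map_ne_zero _).mpr Γ.ne_zero)
  refine ⟨n, fun q hq => hut ?_⟩
  exact hΓ ((Valuation.restrict_lt_iff_lt_embedding _).mpr (lt_of_le_of_lt hq hn))

lemma aux_crt [DecidableEq (HeightOneSpectrum R)] (v : HeightOneSpectrum R) (S : Finset (HeightOneSpectrum R)) (n : ℕ) :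
    ∃ a : R, v.intValuation (a - 1) ≤ ((Multiplicative.ofAdd (-(n:ℤ)) : Multiplicative ℤ) : ℤₘ₀) ∧
      ∀ w ∈ S, w ≠ v → w.intValuation a ≤
        ((Multiplicative.ofAdd (-(n:ℤ)) : Multiplicative ℤ) : ℤₘ₀) := by
  obtain ⟨y, hy⟩ := IsDedekindDomain.exists_forall_sub_mem_ideal
    (s := insert v S) (fun w => w.asIdeal) (fun _ => n)
    (fun w _ => Ideal.prime_of_isPrime w.ne_bot w.isPrime)
    (fun w _ u _ hwu => fun h => hwu (HeightOneSpectrum.ext h))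
    (fun w => if (w : HeightOneSpectrum R) = v then 1 else 0)
  refine ⟨y, ?_, fun w hw hwv => ?_⟩
  · have := hy v (Finset.mem_insert_self v S)
    rw [if_pos rfl] at this
    exact (v.intValuation_le_pow_iff_mem _ n).mpr this
  · have := hy w (Finset.mem_insert_of_mem hw)
    rw [if_neg hwv, sub_zero] at this
    exact (w.intValuation_le_pow_iff_mem _ n).mpr this


lemma aux_vmap (v : HeightOneSpectrum R) (r : R) :
    Valued.v (algebraMap R (v.adicCompletion K) r) = v.intValuation r := by
  have h : algebraMap R (v.adicCompletion K) r
      = ((algebraMap R K r : K) : v.adicCompletion K) := by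
    rw [IsScalarTower.algebraMap_apply R K (v.adicCompletion K)]
    rfl
  rw [h, valuedAdicCompletion_eq_valuation', valuation_of_algebraMap, intValuation_apply]

lemma aux_mem_int (v : HeightOneSpectrum R) (y : v.adicCompletionIntegers K) :
    Valued.v (y : v.adicCompletion K) ≤ 1 :=
  (mem_adicCompletionIntegers R K v).mp y.2

lemma aux_bound1 (v : HeightOneSpectrum R) (a : R) (y : v.adicCompletionIntegers K) :
    Valued.v ((↑(a • y) : v.adicCompletion K) - ↑y) ≤ v.intValuation (a - 1) := by
  have h : (↑(a • y) : v.adicCompletion K) - ↑y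
      = algebraMap R (v.adicCompletion K) (a - 1) * (y : v.adicCompletion K) := by
    rw [coe_smul_adicCompletionIntegers, Algebra.smul_def, map_sub, map_one]
    ring
  rw [h, Valuation.map_mul, aux_vmap]
  exact le_trans (mul_le_mul' le_rfl (aux_mem_int v y)) (le_of_eq (mul_one _))

lemma aux_bound2 (v : HeightOneSpectrum R) (a : R) (y : v.adicCompletionIntegers K) :
    Valued.v ((↑(a • y) : v.adicCompletion K)) ≤ v.intValuation a := by
  have h : (↑(a • y) : v.adicCompletion K)
      = algebraMap R (v.adicCompletion K) a * (y : v.adicCompletion K) := by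
    rw [coe_smul_adicCompletionIntegers, Algebra.smul_def]
  rw [h, Valuation.map_mul, aux_vmap]
  exact le_trans (mul_le_mul' le_rfl (aux_mem_int v y)) (le_of_eq (mul_one _))


lemma aux_mono {m n : ℕ} (h : m ≤ n) :
    ((Multiplicative.ofAdd (-(n:ℤ)) : Multiplicative ℤ) : ℤₘ₀) ≤
      ((Multiplicative.ofAdd (-(m:ℤ)) : Multiplicative ℤ) : ℤₘ₀) := by
  rw [WithZero.coe_le_coe, Multiplicative.ofAdd_le]
  omega

lemma aux_single [DecidableEq (HeightOneSpectrum R)]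
    (J : Submodule R (FiniteIntegralAdeles R K))
    (hJ : IsClosed (J : Set (FiniteIntegralAdeles R K)))
    {x : FiniteIntegralAdeles R K} (hx : x ∈ J) (v : HeightOneSpectrum R) :
    (Pi.single v (x v) : FiniteIntegralAdeles R K) ∈ J := by
  have hcl : (Pi.single v (x v) : FiniteIntegralAdeles R K) ∈
      closure (J : Set (FiniteIntegralAdeles R K)) := by
    refine mem_closure_iff_nhds.mpr ?_
    intro U hU
    replace hU : U ∈ @nhds (∀ w : HeightOneSpectrum R, w.adicCompletionIntegers K)
        Pi.topologicalSpace _ := hU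
    rw [nhds_pi, Filter.mem_pi] at hU
    obtain ⟨I, hIfin, t, ht, htU⟩ := hU
    choose N hN using fun w : HeightOneSpectrum R =>
      aux_nhds w ((Pi.single v (x v) : FiniteIntegralAdeles R K) w) (t w) (ht w)
    obtain ⟨a, ha1, ha2⟩ := aux_crt v hIfin.toFinset (hIfin.toFinset.sup N)
    refine ⟨a • x, htU (fun w hw => ?_), J.smul_mem a hx⟩
    have hnw : N w ≤ hIfin.toFinset.sup N := Finset.le_sup (hIfin.mem_toFinset.mpr hw)
    apply hN w
    by_cases hwv : w = v
    · subst hwv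
      have hax : (a • x) w = a • (x w) := rfl
      rw [hax, Pi.single_eq_same]
      exact le_trans (aux_bound1 w a (x w)) (le_trans ha1 (aux_mono hnw))
    · have hax : (a • x) w = a • (x w) := rfl
      rw [hax, Pi.single_eq_of_ne hwv]
      have h0 : ((0 : w.adicCompletionIntegers K) : w.adicCompletion K) = 0 := rfl
      rw [h0, sub_zero]
      exact le_trans (aux_bound2 w a (x w))
        (le_trans (ha2 w (hIfin.mem_toFinset.mpr hw) hwv) (aux_mono hnw))
  exact hJ.closure_subset hcl



theorem stmt7_general [DecidableEq (HeightOneSpectrum R)]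
    (J : Submodule R (FiniteIntegralAdeles R K))
    (hJ : IsClosed (J : Set (FiniteIntegralAdeles R K)))
    (Jproj : ∀ v : HeightOneSpectrum R, Set (v.adicCompletionIntegers K))
    (hJproj : ∀ v, Jproj v = (fun x : FiniteIntegralAdeles R K => x v) '' J) :
    (∀ (v : HeightOneSpectrum R) (y : v.adicCompletionIntegers K),
      y ∈ Jproj v ↔ (Pi.single v y : FiniteIntegralAdeles R K) ∈ J) ∧
    (∀ v : HeightOneSpectrum R, IsClosed (Jproj v)) ∧
    (∀ (v : HeightOneSpectrum R), ∀ c : v.adicCompletionIntegers K,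
      ∀ y ∈ Jproj v, c * y ∈ Jproj v) ∧
    (∀ (v : HeightOneSpectrum R), (0 : v.adicCompletionIntegers K) ∈ Jproj v ∧
      ∀ y ∈ Jproj v, ∀ z ∈ Jproj v, y + z ∈ Jproj v) ∧
    (∀ x : FiniteIntegralAdeles R K,
      x ∈ J ↔ ∀ v : HeightOneSpectrum R, x v ∈ Jproj v) := by
  have part1 : ∀ (v : HeightOneSpectrum R) (y : v.adicCompletionIntegers K),
      y ∈ Jproj v ↔ (Pi.single v y : FiniteIntegralAdeles R K) ∈ J := by
    intro v y
    constructor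
    · intro hy
      rw [hJproj] at hy
      obtain ⟨x, hxJ, hxv⟩ := hy
      have := aux_single J hJ hxJ v
      rwa [show x v = y from hxv] at this
    · intro h
      rw [hJproj]
      refine ⟨Pi.single v y, h, ?_⟩
      exact Pi.single_eq_same
        (M := fun w : HeightOneSpectrum R => w.adicCompletionIntegers K) v y
  refine ⟨part1, ?_, ?_, ?_, ?_⟩
  · -- closedness
    intro v
    have heq : Jproj v =
        (fun y : v.adicCompletionIntegers K =>
          (Pi.single v y : FiniteIntegralAdeles R K)) ⁻¹'
            ((J : Set (FiniteIntegralAdeles R K))) :=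
      Set.ext (fun y => by
        show y ∈ Jproj v ↔ (Pi.single v y : FiniteIntegralAdeles R K) ∈ J
        exact part1 v y)
    rw [heq]
    exact IsClosed.preimage (continuous_single v) hJ
  · -- ideal: multiplication
    intro v c y hy
    have hsy : (Pi.single v y : FiniteIntegralAdeles R K) ∈ J := (part1 v y).mp hy
    rw [part1]
    have hcl : (Pi.single v (c * y) : FiniteIntegralAdeles R K) ∈
        closure (J : Set (FiniteIntegralAdeles R K)) := by
      refine mem_closure_iff_nhds.mpr ?_
      intro U hU
      replace hU : U ∈ @nhds (∀ w : HeightOneSpectrum R, w.adicCompletionIntegers K)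
          Pi.topologicalSpace _ := hU
      rw [nhds_pi, Filter.mem_pi] at hU
      obtain ⟨I, hIfin, t, ht, htU⟩ := hU
      obtain ⟨n, hn⟩ := aux_nhds v ((Pi.single v (c * y) :
        FiniteIntegralAdeles R K) v) (t v) (ht v)
      obtain ⟨a, ha⟩ := aux_dense v (c : v.adicCompletion K) (aux_mem_int v c) n
      refine ⟨a • (Pi.single v y : FiniteIntegralAdeles R K),
        htU (fun w hw => ?_), J.smul_mem a hsy⟩
      by_cases hwv : w = v
      · subst hwv
        have hax : (a • (Pi.single w y : FiniteIntegralAdeles R K)) w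
            = a • ((Pi.single w y : FiniteIntegralAdeles R K) w) := Pi.smul_apply _ _ _
        apply hn
        rw [hax, Pi.single_eq_same, Pi.single_eq_same]
        have hc : ((c * y : w.adicCompletionIntegers K) : w.adicCompletion K)
            = (c : w.adicCompletion K) * (y : w.adicCompletion K) := rfl
        have hkey : ((a • y : w.adicCompletionIntegers K) : w.adicCompletion K)
            - ((c * y : w.adicCompletionIntegers K) : w.adicCompletion K)
            = (algebraMap R (w.adicCompletion K) a - (c : w.adicCompletion K))
              * (y : w.adicCompletion K) := by
          rw [hc, coe_smul_adicCompletionIntegers, Algebra.smul_def]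
          ring
        rw [hkey, Valuation.map_mul]
        refine le_trans (mul_le_mul' ?_ (aux_mem_int w y)) (le_of_eq (mul_one _))
        rw [Valuation.map_sub_swap]
        exact ha
      · have hax : (a • (Pi.single v y : FiniteIntegralAdeles R K)) w
            = a • ((Pi.single v y : FiniteIntegralAdeles R K) w) := Pi.smul_apply _ _ _
        have hz : (a • (Pi.single v y : FiniteIntegralAdeles R K)) w
            = (Pi.single v (c * y) : FiniteIntegralAdeles R K) w := by
          rw [hax, Pi.single_eq_of_ne hwv, Pi.single_eq_of_ne hwv]
          exact smul_zero a
        rw [hz]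
        exact mem_of_mem_nhds (ht w)
    exact hJ.closure_subset hcl
  · -- additive subgroup
    intro v
    constructor
    · rw [part1, Pi.single_zero]
      exact J.zero_mem
    · intro y hy z hz
      rw [part1] at hy hz ⊢
      rw [Pi.single_add]
      exact J.add_mem hy hz
  · -- membership criterion
    intro x
    constructor
    · intro hx v
      rw [hJproj]
      exact ⟨x, hx, rfl⟩
    · intro hx
      have hcl : x ∈ closure (J : Set (FiniteIntegralAdeles R K)) := by
        refine mem_closure_iff_nhds.mpr ?_
        intro U hU
        replace hU : U ∈ Filter.pi (fun w : HeightOneSpectrum R => nhds (x w)) :=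
          (Filter.ext_iff.mp nhds_pi _).mp hU
        replace hU := Filter.mem_pi.mp hU
        obtain ⟨I, hIfin, t, ht, htU⟩ := hU
        refine ⟨∑ w ∈ hIfin.toFinset, (Pi.single w (x w) : FiniteIntegralAdeles R K),
          htU (fun w hw => ?_), Submodule.sum_mem J (fun w _ => (part1 w (x w)).mp (hx w))⟩
        have hzw : (∑ u ∈ hIfin.toFinset,
            (Pi.single u (x u) : FiniteIntegralAdeles R K)) w = x w := by
          rw [Finset.sum_apply]
          rw [show (fun u => (Pi.single u (x u) : FiniteIntegralAdeles R K) w)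
            = fun u => if w = u then x w else 0 from funext (fun u => by
              by_cases h : w = u
              · subst h; rw [Pi.single_eq_same, if_pos rfl]
              · rw [Pi.single_eq_of_ne h, if_neg h])]
          rw [Finset.sum_ite_eq]
          exact if_pos (hIfin.mem_toFinset.mpr hw)
        refine (congrArg (· ∈ t w) hzw).mpr ?_
        exact mem_of_mem_nhds (ht w)
      exact hJ.closure_subset hcl



end Aux


/-- let `J` be a closed `𝒪_K`-submodule of `𝒪~_K = ∏_𝔭 𝒪_𝔭`. For each
finite place `v`, the projection `π_v(J) ⊆ 𝒪_v` coincides with the intersection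
`({0} × 𝒪_v) ∩ J` (elements of `J` supported at `v`), and is a closed ideal `J_v` of
`𝒪_v`; moreover `x ∈ J` iff `π_v(x) ∈ J_v` for all `v`. -/
theorem stmt7 {K : Type*} [Field K] [NumberField K]
    [DecidableEq (HeightOneSpectrum (𝓞 K))]
    (J : Submodule (𝓞 K) (FiniteIntegralAdeles (𝓞 K) K))
    (hJ : IsClosed (J : Set (FiniteIntegralAdeles (𝓞 K) K)))
    (Jproj : ∀ v : HeightOneSpectrum (𝓞 K), Set (v.adicCompletionIntegers K))
    (hJproj : ∀ v, Jproj v = (fun x : FiniteIntegralAdeles (𝓞 K) K => x v) '' J) :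
    (∀ (v : HeightOneSpectrum (𝓞 K)) (y : v.adicCompletionIntegers K),
      y ∈ Jproj v ↔ (Pi.single v y : FiniteIntegralAdeles (𝓞 K) K) ∈ J) ∧
    (∀ v : HeightOneSpectrum (𝓞 K), IsClosed (Jproj v)) ∧
    (∀ (v : HeightOneSpectrum (𝓞 K)), ∀ c : v.adicCompletionIntegers K,
      ∀ y ∈ Jproj v, c * y ∈ Jproj v) ∧
    (∀ (v : HeightOneSpectrum (𝓞 K)), (0 : v.adicCompletionIntegers K) ∈ Jproj v ∧
      ∀ y ∈ Jproj v, ∀ z ∈ Jproj v, y + z ∈ Jproj v) ∧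
    (∀ x : FiniteIntegralAdeles (𝓞 K) K,
      x ∈ J ↔ ∀ v : HeightOneSpectrum (𝓞 K), x v ∈ Jproj v) := by
  exact stmt7_general J hJ Jproj hJproj
end

section
/- The set $\widetilde{\mathcal{C}_{\mathcal{O}_K}}$, consisting of $\emptyset$, $\{0\}$, and all convex polygons in $\mathbb{C} \cong \mathbb{R}^2$ with nonempty interior, center $0$, vertices in $\mathcal{O}_K$, and invariant under multiplication by every unit of $\mathcal{O}_K$, forms an idempotent semiring under the operations $(A,B) \mapsto \mathrm{Conv}(A \cup B)$ (addition, with neutral element $\emptyset$) and Minkowski sum $+$ (multiplication, with neutral element $\{0\}$). -/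
open Pointwise

/-- for `𝒪_K` the ring of integers of an imaginary quadratic field (viewed
as a subring of `ℂ`), the collection `𝒞~` of `∅`, `{0}` and convex polygons with
nonempty interior, center `0`, vertices in `𝒪_K`, invariant under multiplication by the
units of `𝒪_K`, is an idempotent semiring under `(A,B) ↦ Conv(A ∪ B)` (with neutral
element `∅`) and Minkowski sum (with neutral element `{0}`). -/
theorem stmt9 (O : Subring ℂ) (CT : Set (Set ℂ))
    (hCT : CT = {C : Set ℂ | C = ∅ ∨ C = {0} ∨
      ((∃ S : Finset ℂ, (↑S : Set ℂ) ⊆ (O : Set ℂ) ∧ C = convexHull ℝ ↑S) ∧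
        (interior C).Nonempty ∧ C = -C ∧
        ∀ u : Oˣ, (((u : O) : ℂ)) • C = C)}) :
    -- closure under the two laws
    (∀ A ∈ CT, ∀ B ∈ CT, convexHull ℝ (A ∪ B) ∈ CT) ∧
    (∀ A ∈ CT, ∀ B ∈ CT, A + B ∈ CT) ∧
    -- `Conv(• ∪ •)` is commutative, associative, idempotent, with neutral element `∅`
    (∀ A B : Set ℂ, convexHull ℝ (A ∪ B) = convexHull ℝ (B ∪ A)) ∧
    (∀ A ∈ CT, ∀ B ∈ CT, ∀ C ∈ CT,
      convexHull ℝ (convexHull ℝ (A ∪ B) ∪ C) = convexHull ℝ (A ∪ convexHull ℝ (B ∪ C))) ∧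
    (∀ A ∈ CT, convexHull ℝ (A ∪ A) = A) ∧
    (∀ A ∈ CT, convexHull ℝ (A ∪ (∅ : Set ℂ)) = A) ∧
    -- Minkowski sum is commutative, associative, with neutral element `{0}`,
    -- `∅` being absorbing, and distributes over `Conv(• ∪ •)`
    (∀ A B : Set ℂ, A + B = B + A) ∧
    (∀ A B C : Set ℂ, (A + B) + C = A + (B + C)) ∧
    (∀ A : Set ℂ, A + ({0} : Set ℂ) = A) ∧
    (∀ A : Set ℂ, A + (∅ : Set ℂ) = ∅) ∧
    (∀ A ∈ CT, ∀ B ∈ CT, ∀ C ∈ CT,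
      A + convexHull ℝ (B ∪ C) = convexHull ℝ ((A + B) ∪ (A + C))) := by
  -- A helper: every member of `CT` is convex.
  have memconv : ∀ {A : Set ℂ}, A ∈ CT → Convex ℝ A := by
    intro A hA; rw [hCT] at hA
    rcases hA with rfl | rfl | ⟨⟨S, -, rfl⟩, -⟩
    · exact convex_empty
    · exact convex_singleton 0
    · exact convex_convexHull ℝ _
  -- zero membership for symmetric convex sets with nonempty interior
  have zero_mem : ∀ (B : Set ℂ), Convex ℝ B → (interior B).Nonempty → B = -B → (0:ℂ) ∈ B := by
    intro B hc hint hneg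
    obtain ⟨x, hx⟩ := hint
    have hxB : x ∈ B := interior_subset hx
    have hmx : -x ∈ B := by rw [hneg]; exact Set.neg_mem_neg.mpr hxB
    have h := hc hxB hmx (by norm_num : (0:ℝ) ≤ 1/2) (by norm_num : (0:ℝ) ≤ 1/2)
      (by norm_num : (1/2 : ℝ) + 1/2 = 1)
    have h0 : (1/2:ℝ) • x + (1/2:ℝ) • (-x) = 0 := by module
    rwa [h0] at h
  have smul_set_add : ∀ (c : ℂ) (s t : Set ℂ), c • (s + t) = c • s + c • t := by
    intro c s t
    ext x
    simp only [Set.mem_smul_set, Set.mem_add]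
    constructor
    · rintro ⟨y, ⟨a, ha, b, hb, rfl⟩, rfl⟩
      exact ⟨c • a, ⟨a, ha, rfl⟩, c • b, ⟨b, hb, rfl⟩, (smul_add c a b).symm⟩
    · rintro ⟨-, ⟨a, ha, rfl⟩, -, ⟨b, hb, rfl⟩, rfl⟩
      exact ⟨a + b, ⟨a, ha, b, hb, rfl⟩, smul_add c a b⟩
  have csmul_hull : ∀ (c : ℂ) (s : Set ℂ), c • convexHull ℝ s = convexHull ℝ (c • s) := by
    intro c s
    have h : IsLinearMap ℝ (fun x : ℂ => c * x) :=
      ⟨mul_add c, fun r x => by simp [Complex.real_smul]; ring⟩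
    have h2 := h.image_convexHull s
    simp only [← Set.image_smul, smul_eq_mul]
    exact h2
  refine ⟨?_, ?_, ?_, ?_, ?_, ?_, ?_, ?_, ?_, ?_, ?_⟩
  · -- closure under Conv(∪)
    intro A hA B hB
    have hAc := memconv hA
    have hBc := memconv hB
    rw [hCT] at hA hB ⊢
    rcases hA with rfl | rfl | hPA
    · rw [Set.empty_union, hBc.convexHull_eq]; exact hB
    · rcases hB with rfl | rfl | hPB
      · rw [Set.union_empty, convexHull_singleton]; exact Or.inr (Or.inl rfl)
      · rw [Set.union_self, convexHull_singleton]; exact Or.inr (Or.inl rfl)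
      · obtain ⟨⟨T, hTO, hBT⟩, hintB, hnegB, huB⟩ := hPB
        have h0B : (0:ℂ) ∈ B := zero_mem B hBc hintB hnegB
        rw [Set.union_eq_self_of_subset_left (Set.singleton_subset_iff.mpr h0B),
          hBc.convexHull_eq]
        exact Or.inr (Or.inr ⟨⟨T, hTO, hBT⟩, hintB, hnegB, huB⟩)
    · rcases hB with rfl | rfl | hPB
      · obtain ⟨⟨S, hSO, hAS⟩, hintA, hnegA, huA⟩ := hPA
        rw [Set.union_empty, hAc.convexHull_eq]
        exact Or.inr (Or.inr ⟨⟨S, hSO, hAS⟩, hintA, hnegA, huA⟩)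
      · obtain ⟨⟨S, hSO, hAS⟩, hintA, hnegA, huA⟩ := hPA
        have h0A : (0:ℂ) ∈ A := zero_mem A hAc hintA hnegA
        rw [Set.union_eq_self_of_subset_right (Set.singleton_subset_iff.mpr h0A),
          hAc.convexHull_eq]
        exact Or.inr (Or.inr ⟨⟨S, hSO, hAS⟩, hintA, hnegA, huA⟩)
      · obtain ⟨⟨S, hSO, hAS⟩, hintA, hnegA, huA⟩ := hPA
        obtain ⟨⟨T, hTO, hBT⟩, hintB, hnegB, huB⟩ := hPB
        refine Or.inr (Or.inr ⟨⟨S ∪ T, ?_, ?_⟩, ?_, ?_, ?_⟩)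
        · rw [Finset.coe_union]; exact Set.union_subset hSO hTO
        · rw [Finset.coe_union, hAS, hBT, convexHull_convexHull_union_left,
            convexHull_convexHull_union_right]
        · obtain ⟨x, hx⟩ := hintA
          exact ⟨x, interior_mono
            ((Set.subset_union_left).trans (subset_convexHull ℝ _)) hx⟩
        · conv_lhs => rw [hnegA, hnegB]
          rw [← Set.union_neg, convexHull_neg]
        · intro u
          rw [csmul_hull, Set.smul_set_union, huA u, huB u]
  · -- closure under Minkowski sum
    intro A hA B hB
    rw [hCT] at hA hB ⊢
    rcases hA with rfl | rfl | hPA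
    · rw [Set.empty_add]; exact Or.inl rfl
    · rw [Set.singleton_zero, zero_add]; exact hB
    · rcases hB with rfl | rfl | hPB
      · rw [Set.add_empty]; exact Or.inl rfl
      · rw [Set.singleton_zero, add_zero]
        exact Or.inr (Or.inr hPA)
      · obtain ⟨⟨S, hSO, hAS⟩, hintA, hnegA, huA⟩ := hPA
        obtain ⟨⟨T, hTO, hBT⟩, hintB, hnegB, huB⟩ := hPB
        refine Or.inr (Or.inr ⟨⟨S + T, ?_, ?_⟩, ?_, ?_, ?_⟩)
        · rw [Finset.coe_add]
          rintro x ⟨a, ha, b, hb, rfl⟩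
          exact O.add_mem (hSO ha) (hTO hb)
        · rw [Finset.coe_add, hAS, hBT, convexHull_add]
        · obtain ⟨x, hx⟩ := hintA
          obtain ⟨y, hy⟩ := hintB
          refine ⟨x + y, interior_maximal (Set.add_subset_add_right interior_subset)
            (isOpen_interior.add_right) (Set.add_mem_add hx (interior_subset hy))⟩
        · conv_lhs => rw [hnegA, hnegB]
          rw [neg_add_rev, add_comm]
        · intro u
          rw [smul_set_add, huA u, huB u]
  · intro A B; rw [Set.union_comm]
  · intro A _ B _ C _
    rw [convexHull_convexHull_union_left, convexHull_convexHull_union_right,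
      Set.union_assoc]
  · intro A hA; rw [Set.union_self, (memconv hA).convexHull_eq]
  · intro A hA; rw [Set.union_empty, (memconv hA).convexHull_eq]
  · intro A B; exact add_comm A B
  · intro A B C; exact add_assoc A B C
  · intro A; rw [Set.singleton_zero, add_zero]
  · intro A; exact Set.add_empty
  · intro A hA B _ C _
    rw [← Set.add_union, convexHull_add, (memconv hA).convexHull_eq]
end

section
/- For $K = \mathbb{Q}(\imath)$ or $K = \mathbb{Q}(\imath\sqrt{3})$, let $D_K$ be the convex polygon whose vertices are the units $\mathcal{U}_K$ of $\mathcal{O}_K$. Then every nonempty, nonzero element $C$ of $\widetilde{\mathcal{C}_{\mathcal{O}_K}}$ satisfies $C = \mathrm{Conv}\big(\bigcup_{s \in \mathcal{S}_{+,C}} s \cdot D_K\big)$, where $\mathcal{S}_{+,C}$ is the set of vertices of $C$ with argument in $[0, \theta_K)$ and $\theta_K = \pi/2$ resp. $\pi/3$; consequently $\widetilde{\mathcal{C}_{\mathcal{O}_K}}$ equals the semiring generated by $\{h \cdot D_K : h \in \mathcal{O}_K\}$ together with $\emptyset$. -/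
open Pointwise

/-- The sub-semiring of subsets of `ℂ` generated by a family `G` (for the operations
convex hull of union and Minkowski sum), together with the neutral elements `∅`, `{0}`. -/
def genSemiring (G : Set (Set ℂ)) : Set (Set ℂ) :=
  ⋂₀ {T : Set (Set ℂ) | G ⊆ T ∧ ∅ ∈ T ∧ {(0 : ℂ)} ∈ T ∧
      (∀ A ∈ T, ∀ B ∈ T, convexHull ℝ (A ∪ B) ∈ T) ∧
      (∀ A ∈ T, ∀ B ∈ T, A + B ∈ T)}

namespace Stmt10Aux

open Complex

/-- smul of a convex hull by a complex scalar -/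
lemma csmul_convexHull (c : ℂ) (s : Set ℂ) :
    convexHull ℝ (c • s) = c • convexHull ℝ s := by
  have h := (DistribMulAction.toLinearMap ℝ ℂ c).image_convexHull s
  have hf : ⇑(DistribMulAction.toLinearMap ℝ ℂ c) = fun x => c • x := by funext x; rfl
  rw [hf] at h
  simpa only [Set.image_smul] using h.symm

lemma csmul_extremePoints (u : ℂ) (hu : u ≠ 0) (C : Set ℂ) :
    u • Set.extremePoints ℝ C = Set.extremePoints ℝ (u • C) := by
  have h := image_extremePoints (DistribMulAction.toLinearEquiv ℝ ℂ (Units.mk0 u hu)) C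
  have hf : ⇑(DistribMulAction.toLinearEquiv ℝ ℂ (Units.mk0 u hu)) = fun x => u • x := by
    funext x; rfl
  rw [hf] at h
  simpa only [Set.image_smul] using h

lemma smul_set_add' (c : ℂ) (s t : Set ℂ) : c • (s + t) = c • s + c • t := by
  ext x
  constructor
  · rintro ⟨y, ⟨a, ha, b, hb, rfl⟩, rfl⟩
    exact ⟨c • a, ⟨a, ha, rfl⟩, c • b, ⟨b, hb, rfl⟩, (smul_add c a b).symm⟩
  · rintro ⟨-, ⟨a, ha, rfl⟩, -, ⟨b, hb, rfl⟩, rfl⟩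
    exact ⟨a + b, ⟨a, ha, b, hb, rfl⟩, smul_add c a b⟩

lemma zeta_spec (ζ : ℂ)
    (hζ : ζ = Complex.I ∨ ζ = (1 + Complex.I * Real.sqrt 3) / 2) :
    ‖ζ‖ = 1 ∧ (ζ.arg = Real.pi / 2 ∨ ζ.arg = Real.pi / 3) ∧ 0 < ζ.im := by
  rcases hζ with rfl | rfl
  · refine ⟨Complex.norm_I, Or.inl Complex.arg_I, by simp⟩
  · have h1 : ((1 : ℂ) + Complex.I * Real.sqrt 3) / 2
        = Complex.cos (Real.pi / 3 : ℝ) + Complex.sin (Real.pi / 3 : ℝ) * Complex.I := by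
      rw [← Complex.ofReal_cos, ← Complex.ofReal_sin,
        Real.cos_pi_div_three, Real.sin_pi_div_three]
      push_cast
      ring
    rw [h1]
    refine ⟨Complex.norm_cos_add_sin_mul_I _, Or.inr ?_, ?_⟩
    · have hmem : Real.pi / 3 ∈ Set.Ioc (-Real.pi) Real.pi := by
        constructor <;> nlinarith [Real.pi_pos]
      exact Complex.arg_cos_add_sin_mul_I hmem
    · rw [← Complex.ofReal_cos, ← Complex.ofReal_sin,
        Real.cos_pi_div_three, Real.sin_pi_div_three]
      simp only [Complex.add_im, Complex.ofReal_im, Complex.mul_im, Complex.ofReal_re,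
        Complex.I_im, Complex.I_re, mul_one, mul_zero, zero_add, add_zero]
      positivity

lemma zeta_spec' (ζ : ℂ)
    (hζ : ζ = Complex.I ∨ ζ = (1 + Complex.I * Real.sqrt 3) / 2) :
    ζ ≠ 0 ∧ 0 < ζ.arg ∧ ζ = Complex.exp (ζ.arg * Complex.I) ∧
      ∃ k : ℕ, 4 ≤ k ∧ (k : ℝ) * ζ.arg = 2 * Real.pi ∧ ζ ^ k = 1 := by
  obtain ⟨habs, hargs, him⟩ := zeta_spec ζ hζ
  have hne : ζ ≠ 0 := by
    intro h; rw [h] at habs; simp at habs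
  have hexp : ζ = Complex.exp (ζ.arg * Complex.I) := by
    conv_lhs => rw [← Complex.norm_mul_exp_arg_mul_I ζ]
    rw [habs]; simp
  have hpi := Real.pi_pos
  have hargpos : 0 < ζ.arg := by rcases hargs with h | h <;> rw [h] <;> linarith
  refine ⟨hne, hargpos, hexp, ?_⟩
  rcases hargs with h | h
  · refine ⟨4, le_refl _, by rw [h]; push_cast; ring, ?_⟩
    rw [hexp, ← Complex.exp_nat_mul]
    rw [show (4 : ℕ) * (↑ζ.arg * Complex.I) = 2 * Real.pi * Complex.I by
      rw [h]; push_cast; ring]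
    exact Complex.exp_two_pi_mul_I
  · refine ⟨6, by norm_num, by rw [h]; push_cast; ring, ?_⟩
    rw [hexp, ← Complex.exp_nat_mul]
    rw [show (6 : ℕ) * (↑ζ.arg * Complex.I) = 2 * Real.pi * Complex.I by
      rw [h]; push_cast; ring]
    exact Complex.exp_two_pi_mul_I

lemma rotate (ζ : ℂ)
    (hζ : ζ = Complex.I ∨ ζ = (1 + Complex.I * Real.sqrt 3) / 2)
    {z : ℂ} (hz : z ≠ 0) :
    ∃ n : ℕ, 0 ≤ (ζ ^ n * z).arg ∧ (ζ ^ n * z).arg < ζ.arg ∧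
      ∃ m : ℕ, ζ ^ m * (ζ ^ n * z) = z := by
  obtain ⟨hne, hargpos, hexp, k, hk4, hkarg, hζk⟩ := zeta_spec' ζ hζ
  set θ := ζ.arg with hθ
  set a := z.arg with ha
  have hπ := Real.pi_pos
  have hk4' : (4 : ℝ) ≤ (k : ℝ) := by exact_mod_cast hk4
  have h4θ : 4 * θ ≤ (k : ℝ) * θ := mul_le_mul_of_nonneg_right hk4' hargpos.le
  have hθπ : θ ≤ Real.pi := by linarith
  set n₀ : ℤ := ⌈-a / θ⌉ with hn₀
  have hle : -a / θ ≤ (n₀ : ℝ) := Int.le_ceil _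
  have hlt : (n₀ : ℝ) < -a / θ + 1 := Int.ceil_lt_add_one _
  have h1 : 0 ≤ a + n₀ * θ := by
    have := (div_le_iff₀ hargpos).mp hle
    linarith
  have h2 : a + n₀ * θ < θ := by
    have : (n₀ : ℝ) * θ < (-a / θ + 1) * θ := by
      exact mul_lt_mul_of_pos_right hlt hargpos
    have h3 : -a / θ * θ = -a := div_mul_cancel₀ _ (ne_of_gt hargpos)
    nlinarith
  have hbound1 : -(k : ℤ) ≤ n₀ := by
    have haz : a ≤ Real.pi := Complex.arg_le_pi z
    have : -(k : ℝ) ≤ -a / θ := by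
      rw [le_div_iff₀ hargpos]
      nlinarith
    exact_mod_cast le_trans this hle
  have hbound2 : n₀ ≤ (k : ℤ) := by
    have haz : -Real.pi < a := Complex.neg_pi_lt_arg z
    have hdiv : -a / θ < (k : ℝ) / 2 := by
      rw [div_lt_div_iff₀ hargpos (by norm_num : (0:ℝ) < 2)]
      nlinarith
    have : (n₀ : ℝ) ≤ (k : ℝ) := by nlinarith
    exact_mod_cast this
  set n : ℕ := (n₀ + k).toNat with hn
  have hnZ : (n : ℤ) = n₀ + k := Int.toNat_of_nonneg (by omega)
  have hζkZ : ζ ^ (k : ℤ) = 1 := by rw [zpow_natCast]; exact hζk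
  have hpow : ζ ^ n = ζ ^ n₀ := by
    have h : ζ ^ (n : ℤ) = ζ ^ (n₀ + (k : ℤ)) := by rw [hnZ]
    rw [zpow_natCast] at h
    rw [h, zpow_add₀ hne, hζkZ, mul_one]
  have hzpow : ζ ^ n₀ = Complex.exp ((↑(n₀ * θ) : ℂ) * Complex.I) := by
    rw [hexp, ← Complex.exp_int_mul]
    congr 1
    push_cast
    ring
  have hzform : ζ ^ n * z
      = (‖z‖ : ℂ) * Complex.exp ((↑(a + n₀ * θ) : ℂ) * Complex.I) := by
    have hsplit : ((↑(a + n₀ * θ) : ℂ) * Complex.I)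
        = (↑(n₀ * θ) : ℂ) * Complex.I + (↑a : ℂ) * Complex.I := by push_cast; ring
    rw [hsplit, Complex.exp_add, hpow, hzpow]
    conv_lhs => rw [← Complex.norm_mul_exp_arg_mul_I z]
    rw [← ha]
    ring
  have hargeq : (ζ ^ n * z).arg = a + n₀ * θ := by
    rw [hzform, Complex.exp_mul_I]
    have hmem : a + ↑n₀ * θ ∈ Set.Ioc (-Real.pi) Real.pi :=
      Set.mem_Ioc.mpr ⟨by linarith, by linarith⟩
    exact Complex.arg_mul_cos_add_sin_mul_I (norm_pos_iff.mpr hz) hmem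
  refine ⟨n, by rw [hargeq]; exact h1, by rw [hargeq]; exact h2, 2 * k - n, ?_⟩
  have hnk : n ≤ 2 * k := by omega
  rw [← mul_assoc, ← pow_add, show 2 * k - n + n = k * 2 by omega, pow_mul, hζk,
    one_pow, one_mul]

section

variable {ζ : ℂ} {O U D : Set ℂ}

lemma zeta_sq (hζ : ζ = Complex.I ∨ ζ = (1 + Complex.I * Real.sqrt 3) / 2) :
    ζ ^ 2 = -1 ∨ ζ ^ 2 = ζ - 1 := by
  rcases hζ with rfl | rfl
  · exact Or.inl Complex.I_sq
  · right
    have h3 : ((Real.sqrt 3 : ℝ) : ℂ) ^ 2 = 3 := by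
      rw [← Complex.ofReal_pow, Real.sq_sqrt (by norm_num : (0:ℝ) ≤ 3)]
      norm_num
    have hI := Complex.I_sq
    linear_combination (Complex.I ^ 2 / 4) * h3 + (3 / 4 : ℂ) * hI

lemma zeta_pow_sq (hζ : ζ = Complex.I ∨ ζ = (1 + Complex.I * Real.sqrt 3) / 2) :
    ∃ e f : ℤ, ζ ^ 2 = (e : ℂ) + (f : ℂ) * ζ := by
  rcases zeta_sq hζ with h | h
  · exact ⟨-1, 0, by rw [h]; push_cast; ring⟩
  · exact ⟨-1, 1, by rw [h]; push_cast; ring⟩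

lemma zeta_neg_one (hζ : ζ = Complex.I ∨ ζ = (1 + Complex.I * Real.sqrt 3) / 2) :
    ∃ p : ℕ, ζ ^ p = -1 := by
  rcases zeta_sq hζ with h | h
  · exact ⟨2, h⟩
  · exact ⟨3, by linear_combination (ζ + 1) * h⟩

variable (hO : O = {z : ℂ | ∃ a b : ℤ, z = (a : ℂ) + (b : ℂ) * ζ})
variable (hU : U = {z : ℂ | ∃ n : ℕ, z = ζ ^ n})
variable (hD : D = convexHull ℝ U)

include hO in
lemma O_add {x y : ℂ} (hx : x ∈ O) (hy : y ∈ O) : x + y ∈ O := by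
  subst hO
  obtain ⟨a, b, rfl⟩ := hx
  obtain ⟨c, d, rfl⟩ := hy
  exact ⟨a + c, b + d, by push_cast; ring⟩

include hO in
lemma O_neg {x : ℂ} (hx : x ∈ O) : -x ∈ O := by
  subst hO
  obtain ⟨a, b, rfl⟩ := hx
  exact ⟨-a, -b, by push_cast; ring⟩

include hO in
lemma O_mul (hζ : ζ = Complex.I ∨ ζ = (1 + Complex.I * Real.sqrt 3) / 2)
    {x y : ℂ} (hx : x ∈ O) (hy : y ∈ O) : x * y ∈ O := by
  obtain ⟨e, f, hsq⟩ := zeta_pow_sq hζ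
  subst hO
  obtain ⟨a, b, rfl⟩ := hx
  obtain ⟨c, d, rfl⟩ := hy
  refine ⟨a * c + b * d * e, a * d + b * c + b * d * f, ?_⟩
  push_cast
  linear_combination ((b : ℂ) * d) * hsq

include hO in
lemma O_zeta : ζ ∈ O := by
  subst hO; exact ⟨0, 1, by push_cast; ring⟩

include hO in
lemma O_one : (1 : ℂ) ∈ O := by
  subst hO; exact ⟨1, 0, by push_cast; ring⟩

include hO in
lemma O_pow (hζ : ζ = Complex.I ∨ ζ = (1 + Complex.I * Real.sqrt 3) / 2) (n : ℕ) :
    ζ ^ n ∈ O := by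
  induction n with
  | zero => simpa using O_one hO
  | succ m ih => rw [pow_succ]; exact O_mul hO hζ ih (O_zeta hO)

include hU in
lemma U_pow_mem (n : ℕ) : ζ ^ n ∈ U := by subst hU; exact ⟨n, rfl⟩

include hU in
lemma U_one : (1 : ℂ) ∈ U := by
  subst hU; exact ⟨0, (pow_zero ζ).symm⟩

include hU hO in
lemma U_sub_O (hζ : ζ = Complex.I ∨ ζ = (1 + Complex.I * Real.sqrt 3) / 2) : U ⊆ O := by
  subst hU
  rintro x ⟨n, rfl⟩
  exact O_pow hO hζ n

include hU in
lemma U_neg_mem (hζ : ζ = Complex.I ∨ ζ = (1 + Complex.I * Real.sqrt 3) / 2)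
    {x : ℂ} (hx : x ∈ U) : -x ∈ U := by
  obtain ⟨p, hp⟩ := zeta_neg_one hζ
  subst hU
  obtain ⟨n, rfl⟩ := hx
  exact ⟨p + n, by rw [pow_add, hp]; ring⟩

include hU in
lemma U_neg (hζ : ζ = Complex.I ∨ ζ = (1 + Complex.I * Real.sqrt 3) / 2) : -U = U := by
  ext x
  rw [Set.mem_neg]
  constructor
  · intro h
    simpa using U_neg_mem hU hζ h
  · intro h
    exact U_neg_mem hU hζ h

include hU in
lemma U_smul (hζ : ζ = Complex.I ∨ ζ = (1 + Complex.I * Real.sqrt 3) / 2)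
    {u : ℂ} (hu : u ∈ U) : u • U = U := by
  obtain ⟨-, -, -, k, hk4, -, hζk⟩ := zeta_spec' ζ hζ
  subst hU
  obtain ⟨j, rfl⟩ := hu
  apply Set.Subset.antisymm
  · rintro x ⟨y, ⟨n, rfl⟩, rfl⟩
    exact ⟨j + n, by simp only [smul_eq_mul]; rw [pow_add]⟩
  · rintro x ⟨n, rfl⟩
    refine ⟨ζ ^ (n + j * (k - 1)), ⟨n + j * (k - 1), rfl⟩, ?_⟩
    simp only [smul_eq_mul]
    rw [← pow_add]
    have hexp : j + (n + j * (k - 1)) = n + j * k := by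
      obtain ⟨m, rfl⟩ : ∃ m, k = m + 1 := ⟨k - 1, by omega⟩
      simp only [Nat.add_sub_cancel]
      ring
    rw [hexp, pow_add, pow_mul', hζk, one_pow, mul_one]

include hU in
lemma U_finset (hζ : ζ = Complex.I ∨ ζ = (1 + Complex.I * Real.sqrt 3) / 2) :
    ∃ F : Finset ℂ, U = (F : Set ℂ) := by
  obtain ⟨-, -, -, k, hk4, -, hζk⟩ := zeta_spec' ζ hζ
  refine ⟨Finset.image (fun n => ζ ^ n) (Finset.range k), ?_⟩
  subst hU
  apply Set.Subset.antisymm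
  · rintro x ⟨n, rfl⟩
    simp only [Finset.coe_image, Finset.mem_coe, Set.mem_image, Finset.mem_coe,
      Finset.mem_range]
    refine ⟨n % k, ?_, ?_⟩
    · exact Nat.mod_lt _ (by omega)
    · conv_rhs => rw [← Nat.mod_add_div n k]
      rw [pow_add, pow_mul, hζk, one_pow, mul_one]
  · intro x hx
    simp only [Finset.coe_image, Set.mem_image, Finset.mem_coe, Finset.mem_range] at hx
    obtain ⟨n, -, rfl⟩ := hx
    exact ⟨n, rfl⟩

include hU hD in
lemma D_one : (1 : ℂ) ∈ D := by
  subst hD; exact subset_convexHull ℝ U (U_one hU)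

include hU hD in
lemma D_zeta : ζ ∈ D := by
  subst hD
  apply subset_convexHull ℝ U
  subst hU
  exact ⟨1, (pow_one ζ).symm⟩

include hD in
lemma D_convex : Convex ℝ D := by subst hD; exact convex_convexHull ℝ U

include hU hD in
lemma D_neg_one (hζ : ζ = Complex.I ∨ ζ = (1 + Complex.I * Real.sqrt 3) / 2) :
    (-1 : ℂ) ∈ D := by
  subst hD
  exact subset_convexHull ℝ U (U_neg_mem hU hζ (U_one hU))

include hU hD in
lemma D_zero (hζ : ζ = Complex.I ∨ ζ = (1 + Complex.I * Real.sqrt 3) / 2) :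
    (0 : ℂ) ∈ D := by
  have h0 := (D_convex hD) (D_neg_one hU hD hζ) (D_one hU hD)
    (by norm_num : (0:ℝ) ≤ 1/2) (by norm_num : (0:ℝ) ≤ 1/2) (by norm_num)
  have heq : (1/2 : ℝ) • (-1 : ℂ) + (1/2 : ℝ) • (1 : ℂ) = 0 := by
    rw [Complex.real_smul, Complex.real_smul]; push_cast; ring
  rwa [heq] at h0

include hU hD in
lemma D_symm (hζ : ζ = Complex.I ∨ ζ = (1 + Complex.I * Real.sqrt 3) / 2) :
    -D = D := by
  subst hD
  rw [← convexHull_neg, U_neg hU hζ]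

include hU hD in
lemma D_smul (hζ : ζ = Complex.I ∨ ζ = (1 + Complex.I * Real.sqrt 3) / 2)
    {u : ℂ} (hu : u ∈ U) : u • D = D := by
  subst hD
  rw [← csmul_convexHull, U_smul hU hζ hu]

include hU hD in
lemma D_interior (hζ : ζ = Complex.I ∨ ζ = (1 + Complex.I * Real.sqrt 3) / 2) :
    (interior D).Nonempty := by
  rw [(D_convex hD).interior_nonempty_iff_affineSpan_eq_top]
  rw [AffineSubspace.affineSpan_eq_top_iff_vectorSpan_eq_top_of_nonempty ℝ ℂ ℂ
    ⟨1, D_one hU hD⟩]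
  have him : ζ.im ≠ 0 := ne_of_gt (zeta_spec ζ hζ).2.2
  have h2 : (2 : ℂ) ∈ vectorSpan ℝ D := by
    have h := vsub_mem_vectorSpan ℝ (D_one hU hD) (D_neg_one hU hD hζ)
    have he : (1 : ℂ) -ᵥ (-1 : ℂ) = 2 := by norm_num
    rwa [he] at h
  have hz1 : ζ - 1 ∈ vectorSpan ℝ D := by
    have := vsub_mem_vectorSpan ℝ (D_zeta hU hD) (D_one hU hD)
    simpa using this
  apply le_antisymm le_top
  rintro z -
  have hrep : z = (z.im / ζ.im : ℝ) • (ζ - 1)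
      + ((z.re - z.im / ζ.im * (ζ.re - 1)) / 2 : ℝ) • (2 : ℂ) := by
    rw [Complex.real_smul, Complex.real_smul]
    apply Complex.ext
    · simp only [Complex.add_re, Complex.mul_re, Complex.ofReal_re, Complex.ofReal_im,
        Complex.sub_re, Complex.sub_im, Complex.one_re, Complex.one_im, Complex.re_ofNat,
        Complex.im_ofNat]
      field_simp
      ring
    · simp only [Complex.add_im, Complex.mul_im, Complex.ofReal_re, Complex.ofReal_im,
        Complex.sub_re, Complex.sub_im, Complex.one_re, Complex.one_im, Complex.re_ofNat,
        Complex.im_ofNat]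
      field_simp
      ring
  rw [hrep]
  exact Submodule.add_mem _ (Submodule.smul_mem _ _ hz1) (Submodule.smul_mem _ _ h2)

variable (hζ : ζ = Complex.I ∨ ζ = (1 + Complex.I * Real.sqrt 3) / 2)

include hζ hO hU hD in
lemma key {C : Set ℂ} (S : Finset ℂ) (hSO : (S : Set ℂ) ⊆ O)
    (hCS : C = convexHull ℝ (S : Set ℂ)) (hint : (interior C).Nonempty)
    (hsym : C = -C) (hinv : ∀ u ∈ U, u • C = C) :
    C = convexHull ℝ (⋃ s ∈ {s ∈ Set.extremePoints ℝ C |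
        0 ≤ Complex.arg s ∧ Complex.arg s < Complex.arg ζ}, s • D) := by
  obtain ⟨hζne, hargpos, -, -⟩ := zeta_spec' ζ hζ
  have hCconv : Convex ℝ C := hCS ▸ convex_convexHull ℝ _
  have hCcompact : IsCompact C := hCS ▸ S.finite_toSet.isCompact_convexHull ℝ
  have hES : Set.extremePoints ℝ C ⊆ (S : Set ℂ) := by
    rw [hCS]; exact extremePoints_convexHull_subset
  have hEfin : (Set.extremePoints ℝ C).Finite := S.finite_toSet.subset hES
  have hconvE : convexHull ℝ (Set.extremePoints ℝ C) = C := by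
    have hcl := closure_convexHull_extremePoints hCcompact hCconv
    rwa [(hEfin.isClosed_convexHull ℝ).closure_eq] at hcl
  have hEinv : ∀ (n : ℕ), ∀ x ∈ Set.extremePoints ℝ C, ζ ^ n * x ∈ Set.extremePoints ℝ C := by
    intro n x hx
    have h := csmul_extremePoints (ζ ^ n) (pow_ne_zero _ hζne) C
    rw [hinv (ζ ^ n) (U_pow_mem hU n)] at h
    rw [← h]
    exact ⟨x, hx, rfl⟩
  have h0mem : (0 : ℂ) ∈ interior C := by
    obtain ⟨x, hx⟩ := hint
    have hnx : -x ∈ interior C := by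
      have hopen : IsOpen (-interior C) := isOpen_interior.neg
      have hsub : -interior C ⊆ C := by
        conv_rhs => rw [hsym]
        exact Set.neg_subset_neg.mpr interior_subset
      exact interior_maximal hsub hopen (Set.neg_mem_neg.mpr hx)
    have h0 := (hCconv.interior) hnx hx
      (by norm_num : (0:ℝ) ≤ 1/2) (by norm_num : (0:ℝ) ≤ 1/2) (by norm_num)
    have heq : (1/2 : ℝ) • (-x) + (1/2 : ℝ) • x = 0 := by
      rw [Complex.real_smul, Complex.real_smul]; push_cast; ring
    rwa [heq] at h0
  have hE0 : (0 : ℂ) ∉ Set.extremePoints ℝ C := by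
    intro h0
    obtain ⟨ε, hε, hball⟩ := Metric.isOpen_iff.mp isOpen_interior 0 h0mem
    set v : ℂ := ((ε / 2 : ℝ) : ℂ) with hv
    have hvmem : v ∈ C := by
      apply interior_subset (hball ?_)
      rw [Metric.mem_ball, dist_zero_right, hv, Complex.norm_real, Real.norm_eq_abs,
        abs_of_pos (by linarith)]
      linarith
    have hvnmem : -v ∈ C := by
      apply interior_subset (hball ?_)
      rw [Metric.mem_ball, dist_zero_right, norm_neg, hv, Complex.norm_real, Real.norm_eq_abs,
        abs_of_pos (by linarith)]
      linarith
    have hseg : (0 : ℂ) ∈ openSegment ℝ v (-v) := by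
      refine ⟨1/2, 1/2, by norm_num, by norm_num, by norm_num, ?_⟩
      rw [Complex.real_smul, Complex.real_smul]; push_cast; ring
    have := (h0.2 hvmem hvnmem hseg)
    rw [hv] at this
    have : (ε / 2 : ℝ) = 0 := by exact_mod_cast this
    linarith
  apply Set.Subset.antisymm
  · -- C ⊆ hull of union
    conv_lhs => rw [← hconvE]
    apply convexHull_mono
    intro x hxE
    have hx0 : x ≠ 0 := fun h => hE0 (h ▸ hxE)
    obtain ⟨n, hge, hlt, m, hm⟩ := rotate ζ hζ hx0
    have hsE := hEinv n x hxE
    have hsS : ζ ^ n * x ∈ {s ∈ Set.extremePoints ℝ C |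
        0 ≤ Complex.arg s ∧ Complex.arg s < Complex.arg ζ} := ⟨hsE, hge, hlt⟩
    refine Set.mem_biUnion hsS ?_
    refine ⟨ζ ^ m, ?_, ?_⟩
    · rw [hD]
      exact subset_convexHull ℝ U (U_pow_mem hU m)
    · show (ζ ^ n * x) • (ζ ^ m) = x
      rw [smul_eq_mul, mul_comm]
      exact hm
  · -- hull of union ⊆ C
    apply convexHull_min ?_ hCconv
    rintro x hx
    simp only [Set.mem_iUnion] at hx
    obtain ⟨s, hs, hxD⟩ := hx
    have hsC : s ∈ C := extremePoints_subset hs.1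
    have hsDsub : s • D ⊆ C := by
      rw [hD, ← csmul_convexHull]
      apply convexHull_min ?_ hCconv
      rintro y ⟨w, hw, rfl⟩
      rw [hU] at hw
      obtain ⟨n, rfl⟩ := hw
      have : ζ ^ n • s ∈ ζ ^ n • C := Set.smul_mem_smul_set hsC
      rw [hinv (ζ ^ n) (U_pow_mem hU n)] at this
      simpa [smul_eq_mul, mul_comm] using this
    exact hsDsub hxD

end

/-- The nontrivial (polygon) elements of `CT`. -/
def Poly (O U C : Set ℂ) : Prop :=
  (∃ S : Finset ℂ, (S : Set ℂ) ⊆ O ∧ C = convexHull ℝ (S : Set ℂ)) ∧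
    (interior C).Nonempty ∧ C = -C ∧ ∀ u ∈ U, u • C = C

namespace Poly

variable {O U D : Set ℂ} {ζ : ℂ} {A B C : Set ℂ}

lemma convex (h : Poly O U C) : Convex ℝ C := by
  obtain ⟨⟨S, -, rfl⟩, -⟩ := h
  exact convex_convexHull ℝ _

lemma nonempty (h : Poly O U C) : C.Nonempty := by
  obtain ⟨x, hx⟩ := h.2.1
  exact ⟨x, interior_subset hx⟩

lemma zero_mem (h : Poly O U C) : (0 : ℂ) ∈ C := by
  obtain ⟨x, hx⟩ := h.nonempty
  have hnx : -x ∈ C := by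
    rw [h.2.2.1]
    exact Set.neg_mem_neg.mpr hx
  have h0 := h.convex hx hnx
    (by norm_num : (0:ℝ) ≤ 1/2) (by norm_num : (0:ℝ) ≤ 1/2) (by norm_num)
  have heq : (1/2 : ℝ) • x + (1/2 : ℝ) • (-x) = 0 := by
    rw [Complex.real_smul, Complex.real_smul]; push_cast; ring
  rwa [heq] at h0

lemma hull_union (hA : Poly O U A) (hB : Poly O U B) :
    Poly O U (convexHull ℝ (A ∪ B)) := by
  obtain ⟨⟨S₁, hS₁O, hS₁⟩, hintA, hsymA, hinvA⟩ := hA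
  obtain ⟨⟨S₂, hS₂O, hS₂⟩, hintB, hsymB, hinvB⟩ := hB
  have hhull : convexHull ℝ (A ∪ B) = convexHull ℝ ((↑(S₁ ∪ S₂) : Set ℂ)) := by
    rw [hS₁, hS₂, convexHull_convexHull_union_left, convexHull_convexHull_union_right,
      Finset.coe_union]
  refine ⟨⟨S₁ ∪ S₂, ?_, hhull⟩, ?_, ?_, ?_⟩
  · rw [Finset.coe_union]
    exact Set.union_subset hS₁O hS₂O
  · obtain ⟨x, hx⟩ := hintA
    exact ⟨x, interior_mono (Set.subset_union_left.trans (subset_convexHull ℝ _)) hx⟩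
  · have hneg : -(A ∪ B) = A ∪ B := by
      have h1 : -(A ∪ B) = -A ∪ -B := by
        ext x; simp [Set.mem_neg, Set.mem_union]
      rw [h1, ← hsymA, ← hsymB]
    rw [← convexHull_neg, hneg]
  · intro u hu
    rw [← csmul_convexHull, Set.smul_set_union, hinvA u hu, hinvB u hu]

lemma add (hO : O = {z : ℂ | ∃ a b : ℤ, z = (a : ℂ) + (b : ℂ) * ζ})
    (hA : Poly O U A) (hB : Poly O U B) : Poly O U (A + B) := by
  obtain ⟨⟨S₁, hS₁O, hS₁⟩, hintA, hsymA, hinvA⟩ := hA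
  obtain ⟨⟨S₂, hS₂O, hS₂⟩, hintB, hsymB, hinvB⟩ := hB
  refine ⟨⟨S₁ + S₂, ?_, ?_⟩, ?_, ?_, ?_⟩
  · rw [Finset.coe_add]
    rintro z ⟨x, hx, y, hy, rfl⟩
    exact O_add hO (hS₁O hx) (hS₂O hy)
  · rw [Finset.coe_add, convexHull_add, ← hS₁, ← hS₂]
  · obtain ⟨x, hx⟩ := hintA
    obtain ⟨y, hy⟩ := hintB
    have hopen : IsOpen (interior A + B) := isOpen_interior.add_right
    have hsub : interior A + B ⊆ A + B := Set.add_subset_add_right interior_subset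
    refine ⟨x + y, interior_maximal hsub hopen ?_⟩
    exact Set.add_mem_add hx (interior_subset hy)
  · have : -(A + B) = -A + -B := by
      rw [neg_add_rev]
      exact add_comm _ _
    rw [this, ← hsymA, ← hsymB]
  · intro u hu
    rw [smul_set_add' u A B, hinvA u hu, hinvB u hu]

lemma smulD (hζ : ζ = Complex.I ∨ ζ = (1 + Complex.I * Real.sqrt 3) / 2)
    (hO : O = {z : ℂ | ∃ a b : ℤ, z = (a : ℂ) + (b : ℂ) * ζ})
    (hU : U = {z : ℂ | ∃ n : ℕ, z = ζ ^ n})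
    (hD : D = convexHull ℝ U)
    {h : ℂ} (hh : h ∈ O) (hne : h ≠ 0) : Poly O U (h • D) := by
  obtain ⟨F, hF⟩ := U_finset hU hζ
  refine ⟨⟨Finset.image (fun u => h * u) F, ?_, ?_⟩, ?_, ?_, ?_⟩
  · intro z hz
    simp only [Finset.coe_image, Set.mem_image, Finset.mem_coe] at hz
    obtain ⟨u, hu, rfl⟩ := hz
    have huU : u ∈ U := by rw [hF]; exact hu
    exact O_mul hO hζ hh (U_sub_O hO hU hζ huU)
  · rw [hD, ← csmul_convexHull]
    congr 1
    rw [hF, Finset.coe_image]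
    ext z
    simp [Set.mem_smul_set]
  · rw [interior_smul₀ hne]
    exact (D_interior hU hD hζ).smul_set
  · rw [← Set.smul_set_neg, D_symm hU hD hζ]
  · intro u hu
    rw [smul_comm, D_smul hU hD hζ hu]

end Poly

end Stmt10Aux

/-- for `K = ℚ(i)` or `K = ℚ(i√3)` (with `ζ` a generator of the unit group
`𝒰_K` of `𝒪_K = ℤ[ζ]`, and `D_K` the convex polygon with vertex set `𝒰_K`), every
nonempty, nonzero element `C` of `𝒞~_{𝒪_K}` equals
`Conv(⋃_{s ∈ 𝒮₊(C)} s·D_K)`, where `𝒮₊(C)` is the set of vertices (extreme points) of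
`C` with argument in `[0, θ_K)`, `θ_K = arg ζ`; consequently `𝒞~_{𝒪_K}` is the
semiring generated by `{h·D_K : h ∈ 𝒪_K}` (together with `∅`). -/
theorem stmt10 (ζ : ℂ)
    (hζ : ζ = Complex.I ∨ ζ = (1 + Complex.I * Real.sqrt 3) / 2)
    (O U D : Set ℂ) (hO : O = {z : ℂ | ∃ a b : ℤ, z = (a : ℂ) + (b : ℂ) * ζ})
    (hU : U = {z : ℂ | ∃ n : ℕ, z = ζ ^ n})
    (hD : D = convexHull ℝ U)
    (CT : Set (Set ℂ))
    (hCT : CT = {C : Set ℂ | C = ∅ ∨ C = {0} ∨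
      ((∃ S : Finset ℂ, (↑S : Set ℂ) ⊆ O ∧ C = convexHull ℝ ↑S) ∧
        (interior C).Nonempty ∧ C = -C ∧ ∀ u ∈ U, u • C = C)}) :
    (∀ C ∈ CT, C ≠ ∅ → C ≠ {0} →
      C = convexHull ℝ
        (⋃ s ∈ {s ∈ Set.extremePoints ℝ C |
            0 ≤ Complex.arg s ∧ Complex.arg s < Complex.arg ζ}, s • D)) ∧
    CT = genSemiring {C : Set ℂ | ∃ h ∈ O, C = h • D} := by
  have hconvCT : ∀ X ∈ CT, Convex ℝ X := by
    intro X hX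
    rw [hCT] at hX
    rcases hX with rfl | rfl | hpoly
    · exact convex_empty
    · exact convex_singleton 0
    · exact Stmt10Aux.Poly.convex hpoly
  have h0CT : ∀ X ∈ CT, X ≠ ∅ → (0 : ℂ) ∈ X := by
    intro X hX hne
    rw [hCT] at hX
    rcases hX with rfl | rfl | hpoly
    · exact absurd rfl hne
    · exact rfl
    · exact Stmt10Aux.Poly.zero_mem hpoly
  constructor
  · intro C hC hne h0
    rw [hCT] at hC
    rcases hC with rfl | rfl | ⟨⟨S, hSO, hCS⟩, hint, hsym, hinv⟩
    · exact absurd rfl hne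
    · exact absurd rfl h0
    · exact Stmt10Aux.key hO hU hD hζ S hSO hCS hint hsym hinv
  · apply Set.Subset.antisymm
    · -- CT ⊆ genSemiring
      intro C hC
      rw [genSemiring, Set.mem_sInter]
      intro T hT
      obtain ⟨hG, hemp, hzero, hcup, hadd⟩ := hT
      rw [hCT] at hC
      rcases hC with rfl | rfl | hpoly
      · exact hemp
      · exact hzero
      · obtain ⟨⟨S, hSO, hCS⟩, hint, hsym, hinv⟩ := hpoly
        have hkey := Stmt10Aux.key hO hU hD hζ S hSO hCS hint hsym hinv
        have hES : Set.extremePoints ℝ C ⊆ (S : Set ℂ) := by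
          rw [hCS]; exact extremePoints_convexHull_subset
        have hEfin : ({s ∈ Set.extremePoints ℝ C |
            0 ≤ Complex.arg s ∧ Complex.arg s < Complex.arg ζ}).Finite :=
          (S.finite_toSet.subset hES).subset (Set.sep_subset _ _)
        have hEsubO : {s ∈ Set.extremePoints ℝ C |
            0 ≤ Complex.arg s ∧ Complex.arg s < Complex.arg ζ} ⊆ O :=
          fun s hs => hSO (hES hs.1)
        have claim : ∀ F : Finset ℂ, (F : Set ℂ) ⊆ O →
            convexHull ℝ (⋃ s ∈ (F : Set ℂ), s • D) ∈ T := by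
          intro F
          induction F using Finset.induction_on with
          | empty =>
            intro _
            simpa only [Finset.coe_empty, Set.biUnion_empty, convexHull_empty] using hemp
          | @insert a F ha ih =>
            intro hsub
            have haO : a ∈ O := hsub (by simp)
            have haD : a • D ∈ T := hG ⟨a, haO, rfl⟩
            have hFsub : (F : Set ℂ) ⊆ O := fun x hx => hsub (by simp [hx])
            have hrest := ih hFsub
            have hu := hcup _ haD _ hrest
            rw [convexHull_convexHull_union_right] at hu
            rw [Finset.coe_insert, Set.biUnion_insert]
            exact hu
        have hcoe : (hEfin.toFinset : Set ℂ) = {s ∈ Set.extremePoints ℝ C |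
            0 ≤ Complex.arg s ∧ Complex.arg s < Complex.arg ζ} := hEfin.coe_toFinset
        have := claim hEfin.toFinset (by rw [hcoe]; exact hEsubO)
        rw [hcoe] at this
        rwa [← hkey] at this
    · -- genSemiring ⊆ CT
      apply Set.sInter_subset_of_mem
      have hDne : D.Nonempty := ⟨1, Stmt10Aux.D_one hU hD⟩
      refine ⟨?_, ?_, ?_, ?_, ?_⟩
      · rintro X ⟨h, hhO, rfl⟩
        by_cases hh0 : h = 0
        · subst hh0
          rw [hCT]
          right; left
          rw [Set.zero_smul_set hDne]
          rfl
        · rw [hCT]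
          right; right
          exact Stmt10Aux.Poly.smulD hζ hO hU hD hhO hh0
      · rw [hCT]; exact Or.inl rfl
      · rw [hCT]; exact Or.inr (Or.inl rfl)
      · intro A hA B hB
        have hA' := hA
        have hB' := hB
        rw [hCT] at hA' hB'
        rcases hA' with rfl | hA0 | hApoly
        · rw [Set.empty_union, (hconvCT B hB).convexHull_eq]
          exact hB
        · rcases hB' with rfl | hB0 | hBpoly
          · rw [Set.union_empty, (hconvCT A hA).convexHull_eq]
            exact hA
          · rw [hA0, hB0]
            simp only [Set.union_self, convexHull_singleton]
            rw [hCT]; exact Or.inr (Or.inl rfl)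
          · have h0B : (0 : ℂ) ∈ B := Stmt10Aux.Poly.zero_mem hBpoly
            rw [hA0, Set.union_eq_self_of_subset_left (Set.singleton_subset_iff.mpr h0B),
              (hconvCT B hB).convexHull_eq]
            exact hB
        · rcases hB' with rfl | hB0 | hBpoly
          · rw [Set.union_empty, (hconvCT A hA).convexHull_eq]
            exact hA
          · have h0A : (0 : ℂ) ∈ A := Stmt10Aux.Poly.zero_mem hApoly
            rw [hB0, Set.union_eq_self_of_subset_right (Set.singleton_subset_iff.mpr h0A),
              (hconvCT A hA).convexHull_eq]
            exact hA
          · rw [hCT]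
            right; right
            exact Stmt10Aux.Poly.hull_union hApoly hBpoly
      · intro A hA B hB
        have hA' := hA
        have hB' := hB
        rw [hCT] at hA' hB'
        rcases hA' with rfl | hA0 | hApoly
        · rw [Set.empty_add]
          rw [hCT]; exact Or.inl rfl
        · rcases hB' with rfl | hB0 | hBpoly
          · rw [Set.add_empty]
            rw [hCT]; exact Or.inl rfl
          · have : A + B = B := by
              rw [hA0, Set.singleton_add]
              simp
            rw [this]; exact hB
          · have : A + B = B := by
              rw [hA0, Set.singleton_add]
              simp
            rw [this]; exact hB
        · rcases hB' with rfl | hB0 | hBpoly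
          · rw [Set.add_empty]
            rw [hCT]; exact Or.inl rfl
          · have : A + B = A := by
              rw [hB0, Set.add_singleton]
              simp
            rw [this]; exact hA
          · rw [hCT]
            right; right
            exact Stmt10Aux.Poly.add hO hApoly hBpoly
end

section
/- Let $K$ be an imaginary quadratic number field with class number 1 and $f$ a direct $\mathbb{B}$-automorphism of the semiring $\mathcal{C}_{K,\mathbb{C}}$. Then $f(\emptyset) = \emptyset$, $f(\{0\}) = \{0\}$, and $f$ commutes with all complex homotheties: $f(\lambda C) = \lambda f(C)$ for all $\lambda \in \mathbb{C}$ and $C \in \mathcal{C}_{K,\mathbb{C}}$. -/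
open Pointwise

/-- The semiring `𝒞_{K,ℂ}` generated by the translates `h·D_K`, `h ∈ ℂ`, of the
fundamental polygon `D_K` of an imaginary quadratic field `K` of class number 1. -/
def CKC (D : Set ℂ) : Set (Set ℂ) :=
  genSemiring {C : Set ℂ | ∃ h : ℂ, C = h • D}

lemma real_smul_set (r : ℝ) (S : Set ℂ) : (r:ℂ) • S = r • S := by
  ext z
  constructor
  · rintro ⟨x, hx, rfl⟩; exact ⟨x, hx, by simp [Complex.real_smul]⟩
  · rintro ⟨x, hx, rfl⟩; exact ⟨x, hx, by simp [Complex.real_smul]⟩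

section Basic
variable {D : Set ℂ}

lemma CKC_gen (h : ℂ) : h • D ∈ CKC D :=
  fun _ hT => hT.1 ⟨h, rfl⟩

lemma CKC_empty : ∅ ∈ CKC D := fun _ hT => hT.2.1

lemma CKC_zero : {(0:ℂ)} ∈ CKC D := fun _ hT => hT.2.2.1

lemma CKC_conv {A B : Set ℂ} (hA : A ∈ CKC D) (hB : B ∈ CKC D) :
    convexHull ℝ (A ∪ B) ∈ CKC D :=
  fun T hT => hT.2.2.2.1 A (hA T hT) B (hB T hT)

lemma CKC_add {A B : Set ℂ} (hA : A ∈ CKC D) (hB : B ∈ CKC D) :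
    A + B ∈ CKC D :=
  fun T hT => hT.2.2.2.2 A (hA T hT) B (hB T hT)

lemma CKC_induction {p : Set ℂ → Prop}
    (hgen : ∀ h : ℂ, p (h • D)) (hemp : p ∅) (hzero : p {(0:ℂ)})
    (hconv : ∀ A B, A ∈ CKC D → B ∈ CKC D → p A → p B → p (convexHull ℝ (A ∪ B)))
    (hadd : ∀ A B, A ∈ CKC D → B ∈ CKC D → p A → p B → p (A + B)) :
    ∀ C ∈ CKC D, p C := by
  intro C hC
  have key : C ∈ {X : Set ℂ | X ∈ CKC D ∧ p X} := by
    apply hC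
    refine ⟨?_, ⟨CKC_empty, hemp⟩, ⟨CKC_zero, hzero⟩, ?_, ?_⟩
    · rintro X ⟨h, rfl⟩; exact ⟨CKC_gen h, hgen h⟩
    · rintro A ⟨hA, pA⟩ B ⟨hB, pB⟩
      exact ⟨CKC_conv hA hB, hconv A B hA hB pA pB⟩
    · rintro A ⟨hA, pA⟩ B ⟨hB, pB⟩
      exact ⟨CKC_add hA hB, hadd A B hA hB pA pB⟩
  exact key.2

/-- the structural invariant -/
def Good (C : Set ℂ) : Prop :=
  C = ∅ ∨ ((∃ S : Set ℂ, S.Finite ∧ C = convexHull ℝ S) ∧ (0:ℂ) ∈ C)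

lemma smul_convexHull (a : ℂ) (S : Set ℂ) :
    a • convexHull ℝ S = convexHull ℝ (a • S) := by
  have hlin : IsLinearMap ℝ (fun x : ℂ => a • x) :=
    ⟨fun x y => smul_add a x y, fun c x => smul_comm a c x⟩
  rw [← Set.image_smul, hlin.image_convexHull, Set.image_smul]

lemma smul_set_add' (a : ℂ) (A B : Set ℂ) : a • (A + B) = a • A + a • B := by
  ext z
  simp only [Set.mem_smul_set, Set.mem_add]
  constructor
  · rintro ⟨x, ⟨u, hu, v, hv, rfl⟩, rfl⟩
    exact ⟨a • u, ⟨u, hu, rfl⟩, a • v, ⟨v, hv, rfl⟩, (smul_add a u v).symm⟩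
  · rintro ⟨_, ⟨u, hu, rfl⟩, _, ⟨v, hv, rfl⟩, rfl⟩
    exact ⟨u + v, ⟨u, hu, v, hv, rfl⟩, smul_add a u v⟩

lemma CKC_good (hDpoly : ∃ S : Finset ℂ, D = convexHull ℝ (↑S : Set ℂ))
    (hD0 : (0:ℂ) ∈ D) : ∀ C ∈ CKC D, Good C := by
  obtain ⟨S, rfl⟩ := hDpoly
  apply CKC_induction
  · intro h
    right
    constructor
    · exact ⟨h • (S : Set ℂ), (S.finite_toSet).smul_set, (smul_convexHull h _)⟩
    · exact ⟨0, hD0, smul_zero h⟩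
  · exact Or.inl rfl
  · right
    exact ⟨⟨{0}, Set.finite_singleton _, (convexHull_singleton _).symm⟩, rfl⟩
  · rintro A B _ _ (rfl | ⟨⟨SA, hSA, rfl⟩, h0A⟩) hB
    · rcases hB with rfl | ⟨⟨SB, hSB, rfl⟩, h0B⟩
      · left; simp
      · right
        refine ⟨⟨SB, hSB, ?_⟩, ?_⟩
        · simp [Convex.convexHull_eq (convex_convexHull ℝ _)]
        · exact subset_convexHull ℝ _ (Or.inr h0B)
    · rcases hB with rfl | ⟨⟨SB, hSB, rfl⟩, h0B⟩
      · right
        refine ⟨⟨SA, hSA, ?_⟩, ?_⟩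
        · simp [Convex.convexHull_eq (convex_convexHull ℝ _)]
        · exact subset_convexHull ℝ _ (Or.inl h0A)
      · right
        refine ⟨⟨SA ∪ SB, hSA.union hSB, ?_⟩, subset_convexHull ℝ _ (Or.inl h0A)⟩
        rw [convexHull_convexHull_union_left, convexHull_convexHull_union_right]
  · rintro A B _ _ (rfl | ⟨⟨SA, hSA, rfl⟩, h0A⟩) hB
    · left; simp
    · rcases hB with rfl | ⟨⟨SB, hSB, rfl⟩, h0B⟩
      · left; simp
      · right
        refine ⟨⟨SA + SB, hSA.add hSB, (convexHull_add SA SB).symm⟩, ?_⟩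
        exact ⟨0, h0A, 0, h0B, add_zero 0⟩

end Basic

section B
variable {D : Set ℂ}

lemma CKC_smul (lam : ℂ) {C : Set ℂ} (hC : C ∈ CKC D) : lam • C ∈ CKC D := by
  revert C
  apply CKC_induction (p := fun C => lam • C ∈ CKC D)
  · intro h; rw [smul_smul]; exact CKC_gen _
  · simpa using (CKC_empty : ∅ ∈ CKC D)
  · simpa [Set.smul_set_singleton] using (CKC_zero : {(0:ℂ)} ∈ CKC D)
  · intro A B hA hB pA pB
    rw [smul_convexHull, Set.smul_set_union]
    exact CKC_conv pA pB
  · intro A B hA hB pA pB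
    rw [smul_set_add']
    exact CKC_add pA pB

lemma CKC_rsmul (r : ℝ) {C : Set ℂ} (hC : C ∈ CKC D) : r • C ∈ CKC D := by
  rw [← real_smul_set]; exact CKC_smul _ hC

lemma zero_mem_D (hDpoly : ∃ S : Finset ℂ, D = convexHull ℝ (↑S : Set ℂ))
    (hDint : (interior D).Nonempty) (hDsymm : -D = D) : (0:ℂ) ∈ D := by
  obtain ⟨S, rfl⟩ := hDpoly
  obtain ⟨x, hx⟩ := hDint
  have hxD := interior_subset hx
  have hnxD : -x ∈ convexHull ℝ (S : Set ℂ) := by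
    rw [← hDsymm, Set.mem_neg, neg_neg]; exact hxD
  have := (convex_convexHull ℝ (S : Set ℂ)) hxD hnxD
    (le_of_lt one_half_pos) (le_of_lt one_half_pos) (by norm_num)
  simpa using this

end B

section F
variable {D : Set ℂ} {f : Set ℂ → Set ℂ}

lemma f_mono (hGood : ∀ C ∈ CKC D, Good C)
    (hfconv : ∀ A ∈ CKC D, ∀ B ∈ CKC D,
      f (convexHull ℝ (A ∪ B)) = convexHull ℝ (f A ∪ f B))
    {A B : Set ℂ} (hA : A ∈ CKC D) (hB : B ∈ CKC D) (hAB : A ⊆ B) : f A ⊆ f B := by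
  have hU : A ∪ B = B := Set.union_eq_self_of_subset_left hAB
  have hBc : convexHull ℝ B = B := by
    rcases hGood B hB with rfl | ⟨⟨S, hS, rfl⟩, h0⟩
    · simp
    · exact Convex.convexHull_eq (convex_convexHull ℝ S)
  have := hfconv A hA B hB
  rw [hU, hBc] at this
  rw [this]
  exact Set.subset_union_left.trans (subset_convexHull ℝ _)

lemma self_add_cases {A : Set ℂ} (hcomp : IsCompact A) (hAA : A + A = A) :
    A = ∅ ∨ A = {0} := by
  rcases Set.eq_empty_or_nonempty A with rfl | hne
  · exact Or.inl rfl
  right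
  obtain ⟨a, haA, hmax⟩ := hcomp.exists_isMaxOn hne continuous_norm.continuousOn
  have h2a : a + a ∈ A := by rw [← hAA]; exact ⟨a, haA, a, haA, rfl⟩
  have h2 : ‖a + a‖ ≤ ‖a‖ := hmax h2a
  have ha0 : ‖a‖ ≤ 0 := by
    have : ‖a + a‖ = 2 * ‖a‖ := by
      rw [← two_smul ℝ a, norm_smul]; simp
    linarith
  have ha : a = 0 := norm_le_zero_iff.mp ha0
  apply Set.eq_singleton_iff_nonempty_unique_mem.mpr
  refine ⟨hne, fun x hx => ?_⟩
  have := hmax hx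
  rw [ha] at this
  simpa using norm_le_zero_iff.mp (by simpa using this)

lemma fEmpty_fZero (hGood : ∀ C ∈ CKC D, Good C)
    (hDne : D.Nonempty)
    (hfbij : Set.BijOn f (CKC D) (CKC D))
    (hfadd : ∀ A ∈ CKC D, ∀ B ∈ CKC D, f (A + B) = f A + f B) :
    f ∅ = ∅ ∧ f ({(0:ℂ)}) = {(0:ℂ)} := by
  have hcompact : ∀ C ∈ CKC D, IsCompact C := by
    intro C hC
    rcases hGood C hC with rfl | ⟨⟨S, hS, rfl⟩, h0⟩
    · exact isCompact_empty
    · exact hS.isCompact_convexHull ℝ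
  have hfE : f ∅ ∈ CKC D := hfbij.mapsTo CKC_empty
  have hfZ : f {(0:ℂ)} ∈ CKC D := hfbij.mapsTo CKC_zero
  have hE : f ∅ = ∅ ∨ f ∅ = {0} := by
    apply self_add_cases (hcompact _ hfE)
    rw [← hfadd ∅ CKC_empty ∅ CKC_empty]
    simp
  have hZ : f {(0:ℂ)} = ∅ ∨ f {(0:ℂ)} = {0} := by
    apply self_add_cases (hcompact _ hfZ)
    rw [← hfadd _ CKC_zero _ CKC_zero]
    norm_num [Set.singleton_add_singleton]
  have hDCKC : D ∈ CKC D := by simpa using CKC_gen (D := D) 1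
  rcases hE with hE | hE
  · refine ⟨hE, ?_⟩
    rcases hZ with hZ | hZ
    · exact absurd (hfbij.injOn CKC_zero CKC_empty (hZ.trans hE.symm))
        (by simp [Set.singleton_ne_empty])
    · exact hZ
  · exfalso
    have h1 : f (∅ + D) = f ∅ + f D := hfadd ∅ CKC_empty D hDCKC
    rw [Set.empty_add, hE] at h1
    have h2 : f ∅ = f D := by
      rw [hE, h1]
      simp [Set.singleton_add]
    have := hfbij.injOn CKC_empty hDCKC h2
    exact absurd (this ▸ hDne) (by simp)

end F

section G
variable {D : Set ℂ} {f : Set ℂ → Set ℂ}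

lemma conv_of_good {C : Set ℂ} (h : Good C) : Convex ℝ C := by
  rcases h with rfl | ⟨⟨S, hS, rfl⟩, h0⟩
  · exact convex_empty
  · exact convex_convexHull ℝ S

lemma f_nat (hGood : ∀ C ∈ CKC D, Good C)
    (hfbij : Set.BijOn f (CKC D) (CKC D))
    (hfadd : ∀ A ∈ CKC D, ∀ B ∈ CKC D, f (A + B) = f A + f B) :
    ∀ n : ℕ, n ≠ 0 → ∀ C ∈ CKC D, f ((n : ℝ) • C) = (n : ℝ) • f C := by
  intro n hn
  induction n with
  | zero => exact absurd rfl hn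
  | succ m ih =>
    intro C hC
    rcases Nat.eq_zero_or_pos m with rfl | hm
    · simp
    have hCconv : Convex ℝ C := conv_of_good (hGood C hC)
    have hfCconv : Convex ℝ (f C) := conv_of_good (hGood _ (hfbij.mapsTo hC))
    have hsplit : ((m + 1 : ℕ) : ℝ) • C = (m : ℝ) • C + C := by
      push_cast
      rw [hCconv.add_smul (by positivity) zero_le_one, one_smul]
    have hsplit' : ((m + 1 : ℕ) : ℝ) • f C = (m : ℝ) • f C + f C := by
      push_cast
      rw [hfCconv.add_smul (by positivity) zero_le_one, one_smul]
    rw [hsplit, hfadd _ (CKC_rsmul _ hC) _ hC, ih hm.ne' C hC, hsplit']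

lemma f_rat (hGood : ∀ C ∈ CKC D, Good C)
    (hfbij : Set.BijOn f (CKC D) (CKC D))
    (hfadd : ∀ A ∈ CKC D, ∀ B ∈ CKC D, f (A + B) = f A + f B) :
    ∀ m n : ℕ, m ≠ 0 → n ≠ 0 → ∀ C ∈ CKC D,
      f (((m : ℝ) / (n : ℝ)) • C) = ((m : ℝ) / (n : ℝ)) • f C := by
  intro m n hm hn C hC
  have hn0 : (n : ℝ) ≠ 0 := Nat.cast_ne_zero.mpr hn
  set r : ℝ := (m : ℝ) / (n : ℝ) with hr
  have hrC : r • C ∈ CKC D := CKC_rsmul r hC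
  have key : (n : ℝ) • f (r • C) = (n : ℝ) • (r • f C) := by
    rw [← f_nat hGood hfbij hfadd n hn _ hrC]
    rw [smul_smul, smul_smul]
    have : (n : ℝ) * r = (m : ℝ) := by rw [hr]; field_simp
    rw [this, f_nat hGood hfbij hfadd m hm C hC]
  have h2 := congrArg (fun X => (n : ℝ)⁻¹ • X) key
  simp only [inv_smul_smul₀ hn0] at h2
  exact h2

end G

section H
variable {D : Set ℂ} {f : Set ℂ → Set ℂ}

lemma f_real_sub (hGood : ∀ C ∈ CKC D, Good C)
    (hfbij : Set.BijOn f (CKC D) (CKC D))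
    (hfconv : ∀ A ∈ CKC D, ∀ B ∈ CKC D,
      f (convexHull ℝ (A ∪ B)) = convexHull ℝ (f A ∪ f B))
    (hfadd : ∀ A ∈ CKC D, ∀ B ∈ CKC D, f (A + B) = f A + f B)
    (hf0 : f ∅ = ∅) :
    ∀ r : ℝ, 0 < r → ∀ C ∈ CKC D, f (r • C) ⊆ r • f C := by
  intro r hr C hC
  rcases hGood C hC with rfl | ⟨⟨S, hS, rfl⟩, h0⟩
  · rw [Set.smul_set_empty, hf0]
    exact Set.empty_subset _
  set C := convexHull ℝ S with hCdef
  have hCconv : Convex ℝ C := convex_convexHull ℝ S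
  intro x hx
  -- step: for every rational above r
  have step : ∀ q : ℚ, r < (q : ℝ) → ((q : ℝ))⁻¹ • x ∈ f C := by
    intro q hq
    have hq0 : (0 : ℝ) < (q : ℝ) := lt_trans hr hq
    have hsub : r • C ⊆ (q : ℝ) • C := by
      rintro _ ⟨c, hc, rfl⟩
      refine ⟨(r / (q : ℝ)) • c, ?_, ?_⟩
      · exact hCconv.smul_mem_of_zero_mem h0 hc
          ⟨div_nonneg hr.le hq0.le, (div_le_one hq0).mpr hq.le⟩
      · show (q:ℝ) • ((r / (q:ℝ)) • c) = r • c
        rw [smul_smul, mul_div_cancel₀ _ hq0.ne']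
    have hmono : f (r • C) ⊆ f ((q : ℝ) • C) :=
      f_mono hGood hfconv (CKC_rsmul r hC) (CKC_rsmul _ hC) hsub
    have hqQ : (0 : ℚ) < q := by exact_mod_cast hq0
    have hqval : ((q.num.toNat : ℝ) / (q.den : ℝ)) = (q : ℝ) := by
      rw [Rat.cast_def]
      congr 1
      exact_mod_cast Int.toNat_of_nonneg (le_of_lt (Rat.num_pos.mpr hqQ))
    have hfrat : f ((q : ℝ) • C) = (q : ℝ) • f C := by
      rw [← hqval]
      have hnum : q.num.toNat ≠ 0 := by
        simp only [ne_eq, Int.toNat_eq_zero, not_le]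
        exact Rat.num_pos.mpr hqQ
      exact f_rat hGood hfbij hfadd q.num.toNat q.den hnum q.den_nz C hC
    have hxq : x ∈ (q : ℝ) • f C := hfrat ▸ hmono hx
    obtain ⟨y, hy, rfl⟩ := hxq
    rwa [inv_smul_smul₀ hq0.ne']
  -- choose a sequence of rationals decreasing to r
  have hex : ∀ n : ℕ, ∃ q : ℚ, r < (q : ℝ) ∧ (q : ℝ) < r + 1 / (n + 1) := by
    intro n
    exact exists_rat_btwn (lt_add_of_pos_right r (by positivity))
  choose seq h1 h2 using hex
  have htend : Filter.Tendsto (fun n : ℕ => ((seq n : ℝ))) Filter.atTop (nhds r) := by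
    have hup : Filter.Tendsto (fun n : ℕ => r + 1 / ((n : ℝ) + 1)) Filter.atTop (nhds r) := by
      simpa using (tendsto_const_nhds (x := r) (f := Filter.atTop (α := ℕ))).add
        tendsto_one_div_add_atTop_nhds_zero_nat
    apply tendsto_of_tendsto_of_tendsto_of_le_of_le' tendsto_const_nhds hup
    · exact Filter.Eventually.of_forall fun n => (h1 n).le
    · exact Filter.Eventually.of_forall fun n => (h2 n).le
  have htend2 : Filter.Tendsto (fun n : ℕ => ((seq n : ℝ))⁻¹ • x) Filter.atTop
      (nhds (r⁻¹ • x)) :=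
    (htend.inv₀ hr.ne').smul_const x
  have hclosed : IsClosed (f C) := by
    rcases hGood _ (hfbij.mapsTo hC) with h | ⟨⟨S', hS', hfC⟩, h0'⟩
    · rw [h]; exact isClosed_empty
    · rw [hfC]; exact (hS'.isCompact_convexHull ℝ).isClosed
  have hmem : r⁻¹ • x ∈ f C :=
    hclosed.mem_of_tendsto htend2 (Filter.Eventually.of_forall fun n => step (seq n) (h1 n))
  exact ⟨r⁻¹ • x, hmem, smul_inv_smul₀ hr.ne' x⟩

end H

/-- a direct `𝔹`-automorphism `f` of the semiring `𝒞_{K,ℂ}` (a bijection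
of `𝒞_{K,ℂ}` preserving `Conv(• ∪ •)`, the Minkowski sum, and commuting with the
action of `𝕊¹`) fixes `∅` and `{0}`, and commutes with all complex homotheties:
`f(λC) = λ·f(C)` for all `λ ∈ ℂ` and `C ∈ 𝒞_{K,ℂ}`. -/
theorem stmt12 (D : Set ℂ)
    (hDpoly : ∃ S : Finset ℂ, D = convexHull ℝ (↑S : Set ℂ))
    (hDint : (interior D).Nonempty) (hDsymm : -D = D)
    (f : Set ℂ → Set ℂ)
    (hfbij : Set.BijOn f (CKC D) (CKC D))
    (hfconv : ∀ A ∈ CKC D, ∀ B ∈ CKC D,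
      f (convexHull ℝ (A ∪ B)) = convexHull ℝ (f A ∪ f B))
    (hfadd : ∀ A ∈ CKC D, ∀ B ∈ CKC D, f (A + B) = f A + f B)
    (hfcirc : ∀ μ : ℂ, ‖μ‖ = 1 → ∀ A ∈ CKC D, f (μ • A) = μ • f A) :
    f ∅ = ∅ ∧ f {0} = {0} ∧ ∀ (lam : ℂ), ∀ C ∈ CKC D, f (lam • C) = lam • f C := by
  have hD0 : (0 : ℂ) ∈ D := zero_mem_D hDpoly hDint hDsymm
  have hGood : ∀ C ∈ CKC D, Good C := CKC_good hDpoly hD0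
  have hDne : D.Nonempty := ⟨0, hD0⟩
  obtain ⟨hf0, hfZ⟩ := fEmpty_fZero hGood hDne hfbij hfadd
  -- the inverse map
  set g := Function.invFunOn f (CKC D) with hgdef
  have hinv : Set.InvOn g f (CKC D) (CKC D) := hfbij.invOn_invFunOn
  have hgmaps : Set.MapsTo g (CKC D) (CKC D) := hfbij.surjOn.mapsTo_invFunOn
  have hgbij : Set.BijOn g (CKC D) (CKC D) := hinv.symm.bijOn hgmaps hfbij.mapsTo
  have hgconv : ∀ A ∈ CKC D, ∀ B ∈ CKC D,
      g (convexHull ℝ (A ∪ B)) = convexHull ℝ (g A ∪ g B) := by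
    intro A hA B hB
    have hgA := hgmaps hA
    have hgB := hgmaps hB
    apply hfbij.injOn (hgmaps (CKC_conv hA hB)) (CKC_conv hgA hgB)
    rw [hinv.2 (CKC_conv hA hB), hfconv _ hgA _ hgB, hinv.2 hA, hinv.2 hB]
  have hgadd : ∀ A ∈ CKC D, ∀ B ∈ CKC D, g (A + B) = g A + g B := by
    intro A hA B hB
    have hgA := hgmaps hA
    have hgB := hgmaps hB
    apply hfbij.injOn (hgmaps (CKC_add hA hB)) (CKC_add hgA hgB)
    rw [hinv.2 (CKC_add hA hB), hfadd _ hgA _ hgB, hinv.2 hA, hinv.2 hB]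
  have hg0 : g ∅ = ∅ := by
    have := hinv.1 CKC_empty
    rwa [hf0] at this
  -- positive real homotheties
  have hreal : ∀ r : ℝ, 0 < r → ∀ C ∈ CKC D, f (r • C) = r • f C := by
    intro r hr C hC
    apply Set.Subset.antisymm (f_real_sub hGood hfbij hfconv hfadd hf0 r hr C hC)
    have h1 : g (r • f C) ⊆ r • C := by
      have := f_real_sub hGood hgbij hgconv hgadd hg0 r hr (f C) (hfbij.mapsTo hC)
      rwa [hinv.1 hC] at this
    have h2 := f_mono hGood hfconv (hgmaps (CKC_rsmul r (hfbij.mapsTo hC)))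
      (CKC_rsmul r hC) h1
    rwa [hinv.2 (CKC_rsmul r (hfbij.mapsTo hC))] at h2
  refine ⟨hf0, hfZ, ?_⟩
  intro lam C hC
  by_cases hlam : lam = 0
  · subst hlam
    rcases Set.eq_empty_or_nonempty C with rfl | hne
    · simp [hf0]
    · have hfCne : (f C).Nonempty := by
        rcases Set.eq_empty_or_nonempty (f C) with h | h
        · exact absurd (hfbij.injOn hC CKC_empty (h.trans hf0.symm))
            (by rintro rfl; exact Set.not_nonempty_empty hne)
        · exact h
      rw [Set.zero_smul_set hne, Set.zero_smul_set hfCne, ← Set.singleton_zero]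
      exact hfZ
  · have habs : (0 : ℝ) < ‖lam‖ := norm_pos_iff.mpr hlam
    have habsC : ((‖lam‖ : ℝ) : ℂ) ≠ 0 := by
      exact_mod_cast habs.ne'
    set u : ℂ := lam / ((‖lam‖ : ℝ) : ℂ) with hu_def
    have hu : ‖u‖ = 1 := by
      rw [hu_def, norm_div]
      rw [Complex.norm_real, Real.norm_eq_abs, abs_of_pos habs, div_self habs.ne']
    have hmul : ((‖lam‖ : ℝ) : ℂ) * u = lam := by
      rw [hu_def, mul_div_cancel₀ _ habsC]
    have hdecomp : lam • C = (‖lam‖ : ℝ) • (u • C) := by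
      rw [← real_smul_set, smul_smul, hmul]
    rw [hdecomp, hreal _ habs _ (CKC_smul u hC), hfcirc u hu C hC,
      ← real_smul_set, smul_smul, hmul]
end

section
/- Let $K$ be an imaginary quadratic field with class number 1 and $\lambda \in \mathbb{C}^\star$. If $A, B \in \mathcal{C}_{K,\mathbb{C}}$ satisfy $\lambda D_K = \mathrm{Conv}(A \cup B)$, then $A = \lambda D_K$ or $B = \lambda D_K$ (and the other is contained in it). That is, the elements $\lambda D_K$ are the indecomposable elements of $\mathcal{C}_{K,\mathbb{C}}$ with respect to the operation $\mathrm{Conv}(\bullet \cup \bullet)$. -/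
open Pointwise

noncomputable def fdir (θ : ℝ) (z : ℂ) : ℝ := z.re * Real.cos θ + z.im * Real.sin θ

lemma fdir_continuous (θ : ℝ) : Continuous (fdir θ) := by
  unfold fdir
  exact (Complex.continuous_re.mul continuous_const).add
    (Complex.continuous_im.mul continuous_const)

lemma fdir_abs_le (θ : ℝ) (z : ℂ) : |fdir θ z| ≤ ‖z‖ := by
  have h1 : (fdir θ z) ^ 2 ≤ ‖z‖ ^ 2 := by
    have hz : ‖z‖ ^ 2 = z.re ^ 2 + z.im ^ 2 := by
      rw [Complex.sq_norm, Complex.normSq_apply]; ring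
    have hsc := Real.sin_sq_add_cos_sq θ
    unfold fdir
    nlinarith [sq_nonneg (z.re * Real.sin θ - z.im * Real.cos θ)]
  have := norm_nonneg z
  nlinarith [abs_nonneg (fdir θ z), sq_abs (fdir θ z)]

lemma cos_lip (a b : ℝ) : |Real.cos a - Real.cos b| ≤ |a - b| := by
  rw [Real.cos_sub_cos]
  rw [abs_mul, abs_mul, abs_neg]
  have h1 : |Real.sin ((a+b)/2)| ≤ 1 := abs_le.mpr ⟨Real.neg_one_le_sin _, Real.sin_le_one _⟩
  have h2 : |Real.sin ((a-b)/2)| ≤ |(a-b)/2| := Real.abs_sin_le_abs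
  have : |(a-b)/2| = |a-b|/2 := by rw [abs_div]; norm_num
  calc |(2 : ℝ)| * |Real.sin ((a+b)/2)| * |Real.sin ((a-b)/2)|
      ≤ 2 * 1 * (|a-b|/2) := by
        rw [abs_two]
        apply mul_le_mul _ (this ▸ h2) (abs_nonneg _) (by positivity)
        nlinarith [abs_nonneg (Real.sin ((a+b)/2))]
    _ = |a - b| := by ring

lemma sin_lip (a b : ℝ) : |Real.sin a - Real.sin b| ≤ |a - b| := by
  rw [Real.sin_sub_sin]
  rw [abs_mul, abs_mul]
  have h1 : |Real.cos ((a+b)/2)| ≤ 1 := abs_le.mpr ⟨Real.neg_one_le_cos _, Real.cos_le_one _⟩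
  have h2 : |Real.sin ((a-b)/2)| ≤ |(a-b)/2| := Real.abs_sin_le_abs
  have h3 : |(a-b)/2| = |a-b|/2 := by rw [abs_div]; norm_num
  calc |(2 : ℝ)| * |Real.sin ((a-b)/2)| * |Real.cos ((a+b)/2)|
      ≤ 2 * (|a-b|/2) * 1 := by
        rw [abs_two]
        apply mul_le_mul _ h1 (abs_nonneg _) (by positivity)
        apply mul_le_mul_of_nonneg_left (h3 ▸ h2) (by norm_num)
    _ = |a - b| := by ring


noncomputable def gsup (C : Set ℂ) (θ : ℝ) : ℝ := sSup (fdir θ '' C)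

lemma le_gsup {C : Set ℂ} (hC : IsCompact C) {z : ℂ} (hz : z ∈ C) (θ : ℝ) :
    fdir θ z ≤ gsup C θ :=
  le_csSup (hC.image (fdir_continuous θ)).bddAbove (Set.mem_image_of_mem _ hz)

lemma gsup_le {C : Set ℂ} (hne : C.Nonempty) {θ : ℝ} {M : ℝ}
    (h : ∀ z ∈ C, fdir θ z ≤ M) : gsup C θ ≤ M := by
  apply csSup_le (hne.image _)
  rintro y ⟨z, hz, rfl⟩; exact h z hz

lemma gsup_mono {C₁ C₂ : Set ℂ} (h₁ : C₁.Nonempty) (h₂ : IsCompact C₂) (hsub : C₁ ⊆ C₂)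
    (θ : ℝ) : gsup C₁ θ ≤ gsup C₂ θ :=
  gsup_le h₁ fun z hz => le_gsup h₂ (hsub hz) θ

lemma gsup_nonneg {C : Set ℂ} (hC : IsCompact C) (h0 : (0:ℂ) ∈ C) (θ : ℝ) :
    0 ≤ gsup C θ := by
  have := le_gsup hC h0 θ
  simpa [fdir] using this

lemma fdir_add (θ : ℝ) (a b : ℂ) : fdir θ (a + b) = fdir θ a + fdir θ b := by
  simp [fdir]; ring

lemma gsup_add {A B : Set ℂ} (hA : IsCompact A) (hAne : A.Nonempty)
    (hB : IsCompact B) (hBne : B.Nonempty) (θ : ℝ) :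
    gsup (A + B) θ = gsup A θ + gsup B θ := by
  apply le_antisymm
  · apply gsup_le (hAne.add hBne)
    rintro z hz
    rw [Set.mem_add] at hz
    obtain ⟨a, ha, b, hb, rfl⟩ := hz
    rw [fdir_add]
    exact add_le_add (le_gsup hA ha θ) (le_gsup hB hb θ)
  · have hAB : IsCompact (A + B) := hA.add hB
    have key : ∀ a ∈ A, fdir θ a + gsup B θ ≤ gsup (A + B) θ := by
      intro a ha
      have : ∀ b ∈ B, fdir θ b ≤ gsup (A + B) θ - fdir θ a := by
        intro b hb
        have hm : a + b ∈ A + B := Set.add_mem_add ha hb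
        have := le_gsup hAB hm θ
        rw [fdir_add] at this; linarith
      have := gsup_le hBne this
      linarith
    have : ∀ a ∈ A, fdir θ a ≤ gsup (A + B) θ - gsup B θ := by
      intro a ha; have := key a ha; linarith
    have := gsup_le hAne this
    linarith

lemma gsup_bound {C : Set ℂ} (hne : C.Nonempty) {ρ : ℝ} (hρ : ∀ z ∈ C, ‖z‖ ≤ ρ) (θ : ℝ) :
    gsup C θ ≤ ρ :=
  gsup_le hne fun z hz => le_trans (le_abs_self _) (le_trans (fdir_abs_le θ z) (hρ z hz))

lemma gsup_continuous {C : Set ℂ} (hC : IsCompact C) (hne : C.Nonempty) :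
    Continuous (gsup C) := by
  obtain ⟨zm, hzm, hmax'⟩ := hC.exists_isMaxOn hne continuous_norm.continuousOn
  set ρ := ‖zm‖ with hρdef
  have hmax : ∀ z ∈ C, ‖z‖ ≤ ρ := fun z hz => hmax' hz
  have hρ0 : 0 ≤ ρ := norm_nonneg _
  have key : ∀ θ₁ θ₂ : ℝ, gsup C θ₁ ≤ gsup C θ₂ + 2 * ρ * |θ₁ - θ₂| := by
    intro θ₁ θ₂
    apply gsup_le hne
    intro z hz
    have hd : |fdir θ₁ z - fdir θ₂ z| ≤ 2 * ρ * |θ₁ - θ₂| := by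
      have : fdir θ₁ z - fdir θ₂ z
          = z.re * (Real.cos θ₁ - Real.cos θ₂) + z.im * (Real.sin θ₁ - Real.sin θ₂) := by
        unfold fdir; ring
      rw [this]
      have h1 : |z.re * (Real.cos θ₁ - Real.cos θ₂)| ≤ ρ * |θ₁ - θ₂| := by
        rw [abs_mul]
        apply mul_le_mul (le_trans (Complex.abs_re_le_norm z) (hmax z hz)) (cos_lip _ _)
          (abs_nonneg _) hρ0
      have h2 : |z.im * (Real.sin θ₁ - Real.sin θ₂)| ≤ ρ * |θ₁ - θ₂| := by
        rw [abs_mul]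
        apply mul_le_mul (le_trans (Complex.abs_im_le_norm z) (hmax z hz)) (sin_lip _ _)
          (abs_nonneg _) hρ0
      calc |_ + _| ≤ _ := abs_add_le _ _
        _ ≤ ρ * |θ₁ - θ₂| + ρ * |θ₁ - θ₂| := add_le_add h1 h2
        _ = 2 * ρ * |θ₁ - θ₂| := by ring
    have := le_gsup hC hz θ₂
    have habs := le_abs_self (fdir θ₁ z - fdir θ₂ z)
    linarith
  rw [Metric.continuous_iff]
  intro θ ε hε
  refine ⟨ε / (2 * ρ + 1), by positivity, fun θ' hθ' => ?_⟩
  rw [Real.dist_eq] at hθ' ⊢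
  have h1 := key θ' θ
  have h2 := key θ θ'
  have habs : |θ - θ'| = |θ' - θ| := abs_sub_comm _ _
  have hlt : 2 * ρ * |θ' - θ| < ε := by
    have h3 : 2 * ρ * |θ' - θ| ≤ (2 * ρ + 1) * |θ' - θ| := by nlinarith [abs_nonneg (θ' - θ)]
    have h4 : (2 * ρ + 1) * |θ' - θ| < (2 * ρ + 1) * (ε / (2 * ρ + 1)) := by
      apply mul_lt_mul_of_pos_left hθ' (by positivity)
    have h5 : (2 * ρ + 1) * (ε / (2 * ρ + 1)) = ε := by field_simp
    linarith
  rw [abs_lt]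
  constructor <;> [linarith [h2, habs ▸ hlt]; linarith [h1, hlt]]


lemma fdir_periodic (C : Set ℂ) : Function.Periodic (gsup C) (2 * Real.pi) := by
  intro θ
  unfold gsup
  congr 1
  apply Set.image_congr
  intro z _
  unfold fdir
  rw [Real.cos_add_two_pi, Real.sin_add_two_pi]

lemma fdir_smul (h : ℂ) (θ : ℝ) (z : ℂ) :
    fdir θ (h * z) = ‖h‖ * fdir (θ - Complex.arg h) z := by
  have key := Complex.norm_mul_cos_add_sin_mul_I h
  have hre : ‖h‖ * Real.cos (Complex.arg h) = h.re := by
    have := congrArg Complex.re key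
    simpa using this
  have him : ‖h‖ * Real.sin (Complex.arg h) = h.im := by
    have := congrArg Complex.im key
    simpa using this
  unfold fdir
  rw [Real.cos_sub, Real.sin_sub, Complex.mul_re, Complex.mul_im]
  linear_combination (-(z.re * Real.cos θ) - z.im * Real.sin θ) * hre + (-(z.re * Real.sin θ) + z.im * Real.cos θ) * him

lemma gsup_smul {D : Set ℂ} (hD : IsCompact D) (hne : D.Nonempty) (h : ℂ) (θ : ℝ) :
    gsup (h • D) θ = ‖h‖ * gsup D (θ - Complex.arg h) := by
  obtain ⟨z₀, hz₀, hmax⟩ := hD.exists_isMaxOn hne (fdir_continuous (θ - Complex.arg h)).continuousOn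
  have hmax' : ∀ z ∈ D, fdir (θ - Complex.arg h) z ≤ fdir (θ - Complex.arg h) z₀ :=
    fun z hz => hmax hz
  have hg : gsup D (θ - Complex.arg h) = fdir (θ - Complex.arg h) z₀ :=
    le_antisymm (gsup_le hne hmax') (le_gsup hD hz₀ _)
  have hgr : IsGreatest (fdir θ '' (h • D)) (‖h‖ * fdir (θ - Complex.arg h) z₀) := by
    constructor
    · refine ⟨h • z₀, Set.smul_mem_smul_set hz₀, ?_⟩
      rw [smul_eq_mul, fdir_smul]
    · rintro y ⟨w, hw, rfl⟩
      rw [Set.mem_smul_set] at hw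
      obtain ⟨z, hz, rfl⟩ := hw
      rw [smul_eq_mul, fdir_smul]
      exact mul_le_mul_of_nonneg_left (hmax' z hz) (norm_nonneg h)
  rw [gsup, hgr.csSup_eq, hg]

noncomputable def phi (C : Set ℂ) : ℝ := ∫ θ in (0:ℝ)..(2*Real.pi), gsup C θ

lemma phi_nonneg {C : Set ℂ} (hC : IsCompact C) (h0 : (0:ℂ) ∈ C) : 0 ≤ phi C := by
  apply intervalIntegral.integral_nonneg Real.two_pi_pos.le
  intro θ _
  exact gsup_nonneg hC h0 θ

lemma phi_mono {C₁ C₂ : Set ℂ} (h₁c : IsCompact C₁) (h₁ : C₁.Nonempty) (h₂ : IsCompact C₂)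
    (h₂ne : C₂.Nonempty) (hsub : C₁ ⊆ C₂) : phi C₁ ≤ phi C₂ := by
  apply intervalIntegral.integral_mono_on Real.two_pi_pos.le
    ((gsup_continuous h₁c h₁).intervalIntegrable _ _)
    ((gsup_continuous h₂ h₂ne).intervalIntegrable _ _)
  intro θ _
  exact gsup_mono h₁ h₂ hsub θ

lemma phi_add {A B : Set ℂ} (hA : IsCompact A) (hAne : A.Nonempty)
    (hB : IsCompact B) (hBne : B.Nonempty) : phi (A + B) = phi A + phi B := by
  unfold phi
  rw [← intervalIntegral.integral_add ((gsup_continuous hA hAne).intervalIntegrable _ _)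
    ((gsup_continuous hB hBne).intervalIntegrable _ _)]
  apply intervalIntegral.integral_congr
  intro θ _
  exact gsup_add hA hAne hB hBne θ

lemma phi_smul {D : Set ℂ} (hD : IsCompact D) (hne : D.Nonempty) (h : ℂ) :
    phi (h • D) = ‖h‖ * phi D := by
  unfold phi
  rw [← intervalIntegral.integral_const_mul]
  have heq : ∀ θ ∈ Set.uIcc (0:ℝ) (2*Real.pi), gsup (h • D) θ
      = ‖h‖ * gsup D (θ - Complex.arg h) := fun θ _ => gsup_smul hD hne h θ
  rw [intervalIntegral.integral_congr heq]
  rw [intervalIntegral.integral_const_mul, intervalIntegral.integral_const_mul]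
  congr 1
  rw [intervalIntegral.integral_comp_sub_right (gsup D) (Complex.arg h)]
  have hper := fdir_periodic D
  have := hper.intervalIntegral_add_eq (-Complex.arg h) 0
  simp only [zero_add] at this
  rw [← this]
  congr 1 <;> ring


lemma mem_of_norm_eq_max {s : Set ℂ} {r : ℝ} (hr : 0 < r) (hs : ∀ z ∈ s, ‖z‖ ≤ r)
    {x : ℂ} (hx : x ∈ convexHull ℝ s) (hxn : ‖x‖ = r) : x ∈ s := by
  rw [convexHull_eq] at hx
  obtain ⟨ι, t, w, zf, hw0, hw1, hzs, hcm⟩ := hx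
  rw [Finset.centerMass_eq_of_sum_1 _ _ hw1] at hcm
  set F : ℂ → ℝ := fun z => x.re * z.re + x.im * z.im with hF
  have hnorm_sq : ∀ z : ℂ, ‖z‖ ^ 2 = z.re ^ 2 + z.im ^ 2 := by
    intro z
    rw [Complex.sq_norm, Complex.normSq_apply]; ring
  have hFx : F x = r ^ 2 := by
    have := hnorm_sq x
    rw [hxn] at this
    simp only [hF]; nlinarith
  have hCS : ∀ z : ℂ, F z ≤ ‖x‖ * ‖z‖ := by
    intro z
    have h2 : (F z) ^ 2 ≤ (‖x‖ * ‖z‖) ^ 2 := by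
      have hx2 := hnorm_sq x
      have hz2 := hnorm_sq z
      simp only [hF]
      nlinarith [sq_nonneg (x.re * z.im - x.im * z.re)]
    nlinarith [mul_nonneg (norm_nonneg x) (norm_nonneg z)]
  have hFle : ∀ i ∈ t, F (zf i) ≤ r ^ 2 := by
    intro i hi
    calc F (zf i) ≤ ‖x‖ * ‖zf i‖ := hCS _
      _ ≤ r * r := by
          rw [hxn]
          exact mul_le_mul_of_nonneg_left (hs _ (hzs i hi)) hr.le
      _ = r ^ 2 := by ring
  have hFsum : F x = ∑ i ∈ t, w i * F (zf i) := by
    rw [← hcm]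
    have hre : (∑ i ∈ t, w i • zf i).re = ∑ i ∈ t, w i * (zf i).re := by
      rw [Complex.re_sum]
      apply Finset.sum_congr rfl
      intro i _
      rw [Complex.real_smul, Complex.mul_re]
      simp
    have him : (∑ i ∈ t, w i • zf i).im = ∑ i ∈ t, w i * (zf i).im := by
      rw [Complex.im_sum]
      apply Finset.sum_congr rfl
      intro i _
      rw [Complex.real_smul, Complex.mul_im]
      simp
    simp only [hF, hre, him, Finset.mul_sum, ← Finset.sum_add_distrib]
    apply Finset.sum_congr rfl
    intro i _; ring
  have hzero : ∑ i ∈ t, w i * (r ^ 2 - F (zf i)) = 0 := by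
    have : ∑ i ∈ t, w i * (r ^ 2 - F (zf i))
        = (∑ i ∈ t, w i) * r ^ 2 - ∑ i ∈ t, w i * F (zf i) := by
      rw [Finset.sum_mul, ← Finset.sum_sub_distrib]
      apply Finset.sum_congr rfl
      intro i _; ring
    rw [this, hw1, ← hFsum, hFx]; ring
  have hterm : ∀ i ∈ t, w i * (r ^ 2 - F (zf i)) = 0 :=
    (Finset.sum_eq_zero_iff_of_nonneg
      (fun i hi => mul_nonneg (hw0 i hi) (sub_nonneg.mpr (hFle i hi)))).mp hzero
  have hex : ∃ i ∈ t, 0 < w i := by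
    by_contra hc
    push_neg at hc
    have : ∑ i ∈ t, w i = 0 :=
      Finset.sum_eq_zero fun i hi => le_antisymm (hc i hi) (hw0 i hi)
    rw [hw1] at this; norm_num at this
  obtain ⟨i₀, hi₀, hwi₀⟩ := hex
  have hFz : F (zf i₀) = r ^ 2 := by
    have := hterm i₀ hi₀
    have := mul_eq_zero.mp this
    rcases this with h | h
    · exact absurd h hwi₀.ne'
    · linarith
  have hzn : ‖zf i₀‖ = r := by
    have h1 : ‖zf i₀‖ ≤ r := hs _ (hzs i₀ hi₀)
    have h2 : r ^ 2 ≤ ‖x‖ * ‖zf i₀‖ := hFz ▸ hCS (zf i₀)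
    rw [hxn] at h2
    nlinarith
  have : x = zf i₀ := by
    have hns : Complex.normSq (x - zf i₀) = 0 := by
      have e1 : Complex.normSq (x - zf i₀)
          = (x.re ^ 2 + x.im ^ 2) + ((zf i₀).re ^ 2 + (zf i₀).im ^ 2) - 2 * F (zf i₀) := by
        simp only [Complex.normSq_apply, Complex.sub_re, Complex.sub_im, hF]; ring
      have e2 := hnorm_sq x
      have e3 := hnorm_sq (zf i₀)
      rw [hxn] at e2; rw [hzn] at e3
      rw [e1, ← e2, ← e3, hFz]
      nlinarith
    have h0 := Complex.normSq_eq_zero.mp hns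
    exact sub_eq_zero.mp h0
  rw [this]
  exact hzs i₀ hi₀

lemma zero_of_integral_zero {q : ℝ → ℝ} (hq : Continuous q) (hnn : ∀ θ, 0 ≤ q θ)
    (hint : ∫ θ in (0:ℝ)..(2*Real.pi), q θ = 0) : ∀ θ ∈ Set.Icc 0 (2*Real.pi), q θ = 0 := by
  intro θ₀ hθ₀
  by_contra hne
  have hpos : 0 < q θ₀ := lt_of_le_of_ne (hnn θ₀) (Ne.symm hne)
  set ε := q θ₀ with hε
  obtain ⟨δ, hδ, hball⟩ := Metric.continuousAt_iff.mp hq.continuousAt (ε/2) (by positivity)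
  set c := max 0 (θ₀ - δ/2) with hc
  set d := min (2*Real.pi) (θ₀ + δ/2) with hd
  have hcd : c < d := by
    rw [hc, hd]
    apply max_lt <;> apply lt_min
    · exact Real.two_pi_pos
    · linarith [hθ₀.1]
    · linarith [hθ₀.2]
    · linarith
  have hc0 : 0 ≤ c := le_max_left _ _
  have hd2π : d ≤ 2*Real.pi := min_le_left _ _
  have hq2 : ∀ θ ∈ Set.Icc c d, ε/2 ≤ q θ := by
    intro θ hθ
    have h1 : θ₀ - δ/2 ≤ θ := le_trans (le_max_right _ _) hθ.1
    have h2 : θ ≤ θ₀ + δ/2 := le_trans hθ.2 (min_le_right _ _)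
    have hdist : dist θ θ₀ < δ := by
      rw [Real.dist_eq, abs_lt]; constructor <;> linarith
    have := hball hdist
    rw [Real.dist_eq, abs_lt] at this
    linarith [this.1]
  have hint1 : IntervalIntegrable q MeasureTheory.volume 0 c := hq.intervalIntegrable _ _
  have hint2 : IntervalIntegrable q MeasureTheory.volume c d := hq.intervalIntegrable _ _
  have hint3 : IntervalIntegrable q MeasureTheory.volume d (2*Real.pi) := hq.intervalIntegrable _ _
  have hsplit : ∫ θ in (0:ℝ)..(2*Real.pi), q θ
      = (∫ θ in (0:ℝ)..c, q θ) + (∫ θ in c..d, q θ) + (∫ θ in d..(2*Real.pi), q θ) := by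
    rw [intervalIntegral.integral_add_adjacent_intervals hint1 hint2,
      intervalIntegral.integral_add_adjacent_intervals (hint1.trans hint2) hint3]
  have hI1 : 0 ≤ ∫ θ in (0:ℝ)..c, q θ :=
    intervalIntegral.integral_nonneg hc0 fun θ _ => hnn θ
  have hI3 : 0 ≤ ∫ θ in d..(2*Real.pi), q θ :=
    intervalIntegral.integral_nonneg hd2π fun θ _ => hnn θ
  have hI2 : (d - c) * (ε/2) ≤ ∫ θ in c..d, q θ := by
    have := intervalIntegral.integral_mono_on hcd.le (intervalIntegrable_const) hint2 hq2
    rwa [intervalIntegral.integral_const, smul_eq_mul] at this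
  have : 0 < (d - c) * (ε/2) := by
    apply mul_pos (by linarith) (by positivity)
  linarith [hsplit ▸ hint]


lemma isCompact_convexHull_union {A B : Set ℂ} (hA : IsCompact A) (hB : IsCompact B)
    (hAc : Convex ℝ A) (hBc : Convex ℝ B) (hAne : A.Nonempty) (hBne : B.Nonempty) :
    IsCompact (convexHull ℝ (A ∪ B)) := by
  rw [convexHull_union hAne hBne, hAc.convexHull_eq, hBc.convexHull_eq]
  have heq : convexJoin ℝ A B
      = (fun p : ℝ × ℂ × ℂ => (1 - p.1) • p.2.1 + p.1 • p.2.2) ''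
        (Set.Icc (0:ℝ) 1 ×ˢ A ×ˢ B) := by
    ext z
    rw [mem_convexJoin]
    constructor
    · rintro ⟨a, ha, b, hb, hz⟩
      rw [segment_eq_image] at hz
      obtain ⟨t, ht, hteq⟩ := hz
      exact ⟨(t, a, b), ⟨ht, ha, hb⟩, hteq⟩
    · rintro ⟨⟨t, a, b⟩, ⟨ht, ha, hb⟩, rfl⟩
      refine ⟨a, ha, b, hb, ?_⟩
      rw [segment_eq_image]
      exact ⟨t, ht, rfl⟩
  rw [heq]
  apply IsCompact.image (isCompact_Icc.prod (hA.prod hB))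
  apply Continuous.add
  · exact (continuous_const.sub continuous_fst).smul (continuous_fst.comp continuous_snd)
  · exact continuous_fst.smul (continuous_snd.comp continuous_snd)


lemma phi_singleton_zero : phi {(0:ℂ)} = 0 := by
  unfold phi
  have : ∀ θ ∈ Set.uIcc (0:ℝ) (2*Real.pi), gsup {(0:ℂ)} θ = 0 := by
    intro θ _
    unfold gsup
    rw [Set.image_singleton, csSup_singleton]
    simp [fdir]
  rw [intervalIntegral.integral_congr this]
  simp


lemma smul_set_eq_image (a : ℂ) (D : Set ℂ) : a • D = (fun z => a * z) '' D := by
  ext z; simp [Set.mem_smul_set, smul_eq_mul]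

lemma isCompact_smul_set {D : Set ℂ} (hD : IsCompact D) (a : ℂ) : IsCompact (a • D) := by
  rw [smul_set_eq_image]
  exact hD.image (continuous_const.mul continuous_id)

lemma main_aux (D : Set ℂ) (hDcpt : IsCompact D) (hDne : D.Nonempty)
    (R : ℝ) (hRpos : 0 < R) (hR : ∀ z ∈ D, ‖z‖ ≤ R)
    (lam : ℂ) (hlam : lam ≠ 0) (C : Set ℂ)
    (hCcpt : IsCompact C) (hCcvx : Convex ℝ C) (hCsub : C ⊆ lam • D)
    (x : ℂ) (hxC : x ∈ C) (hxn : ‖x‖ = ‖lam‖ * R)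
    (hinv : ∀ y ∈ C, ‖y‖ * phi D ≤ R * phi C) : C = lam • D := by
  have hCne : C.Nonempty := ⟨x, hxC⟩
  have hlamD_cpt : IsCompact (lam • D) := isCompact_smul_set hDcpt lam
  have hlamD_ne : (lam • D).Nonempty := hDne.smul_set
  have hphiD : phi (lam • D) = ‖lam‖ * phi D := phi_smul hDcpt hDne lam
  have h1 : ‖lam‖ * R * phi D ≤ R * phi C := by
    have := hinv x hxC
    rwa [hxn] at this
  have h2 : phi C ≤ ‖lam‖ * phi D := by
    rw [← hphiD]
    exact phi_mono hCcpt hCne hlamD_cpt hlamD_ne hCsub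
  have hphieq : phi C = ‖lam‖ * phi D := by
    have : R * phi C ≤ R * (‖lam‖ * phi D) := by
      exact mul_le_mul_of_nonneg_left h2 hRpos.le
    nlinarith
  -- support functions agree on [0, 2π]
  have hgeq : ∀ θ ∈ Set.Icc 0 (2*Real.pi), gsup (lam • D) θ - gsup C θ = 0 := by
    apply zero_of_integral_zero
    · exact (gsup_continuous hlamD_cpt hlamD_ne).sub (gsup_continuous hCcpt hCne)
    · intro θ
      have := gsup_mono hCne hlamD_cpt hCsub θ
      linarith
    · have hi1 : IntervalIntegrable (gsup (lam • D)) MeasureTheory.volume 0 (2*Real.pi) :=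
        (gsup_continuous hlamD_cpt hlamD_ne).intervalIntegrable _ _
      have hi2 : IntervalIntegrable (gsup C) MeasureTheory.volume 0 (2*Real.pi) :=
        (gsup_continuous hCcpt hCne).intervalIntegrable _ _
      rw [intervalIntegral.integral_sub hi1 hi2]
      have : (∫ θ in (0:ℝ)..(2*Real.pi), gsup (lam • D) θ) = phi (lam • D) := rfl
      rw [this]
      have : (∫ θ in (0:ℝ)..(2*Real.pi), gsup C θ) = phi C := rfl
      rw [this, hphiD, hphieq]
      ring
  apply Set.Subset.antisymm hCsub
  intro z hz
  by_contra hzc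
  obtain ⟨f, u, hfa, hfu⟩ := geometric_hahn_banach_closed_point hCcvx hCcpt.isClosed hzc
  set c : ℂ := Complex.mk (f 1) (f Complex.I) with hcdef
  have hcre : c.re = f 1 := rfl
  have hcim : c.im = f Complex.I := rfl
  have hf_eq : ∀ w : ℂ, f w = w.re * f 1 + w.im * f Complex.I := by
    intro w
    have hw : w = w.re • (1:ℂ) + w.im • Complex.I := by
      rw [Complex.real_smul, Complex.real_smul, mul_one]
      exact (Complex.re_add_im w).symm
    conv_lhs => rw [hw]
    rw [map_add, map_smul, map_smul]
    simp [smul_eq_mul]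
  have hcne : c ≠ 0 := by
    intro h0
    have h1 : f 1 = 0 := by rw [← hcre, h0]; rfl
    have h2 : f Complex.I = 0 := by rw [← hcim, h0]; rfl
    have hall : ∀ w, f w = 0 := by
      intro w; rw [hf_eq, h1, h2]; ring
    obtain ⟨a₀, ha₀⟩ := hCne
    have := hfa a₀ ha₀
    rw [hall a₀, hall z] at *
    linarith [hfa a₀ ha₀, hfu, hall a₀, hall z]
  set m := ‖c‖ with hm
  have hmpos : 0 < m := by
    rw [hm]
    exact norm_pos_iff.mpr hcne
  set θ₀ := Complex.arg c with hθ₀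
  have hcos : Real.cos θ₀ = c.re / m := Complex.cos_arg hcne
  have hsin : Real.sin θ₀ = c.im / m := Complex.sin_arg c
  have hfd : ∀ w : ℂ, fdir θ₀ w = f w / m := by
    intro w
    rw [fdir, hcos, hsin, hf_eq w, hcre, hcim]
    field_simp
  set θ₁ := if θ₀ < 0 then θ₀ + 2*Real.pi else θ₀ with hθ₁
  have hθ₁Icc : θ₁ ∈ Set.Icc 0 (2*Real.pi) := by
    rw [hθ₁]
    have harg1 := Complex.neg_pi_lt_arg c
    have harg2 := Complex.arg_le_pi c
    have hπ := Real.pi_pos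
    split_ifs with hlt
    · constructor <;> [linarith; linarith]
    · push_neg at hlt
      constructor <;> [linarith; linarith]
  have hfd1 : ∀ w : ℂ, fdir θ₁ w = f w / m := by
    intro w
    rw [hθ₁]
    split_ifs with hlt
    · rw [show fdir (θ₀ + 2*Real.pi) w = fdir θ₀ w by
        unfold fdir; rw [Real.cos_add_two_pi, Real.sin_add_two_pi]]
      exact hfd w
    · exact hfd w
  have hgC : gsup C θ₁ ≤ u / m := by
    apply gsup_le hCne
    intro a ha
    rw [hfd1]
    exact (div_le_div_iff_of_pos_right hmpos).mpr (hfa a ha).le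
  have hgD : u / m < gsup (lam • D) θ₁ := by
    have h1 : fdir θ₁ z ≤ gsup (lam • D) θ₁ := le_gsup hlamD_cpt hz θ₁
    rw [hfd1] at h1
    have : u / m < f z / m := (div_lt_div_iff_of_pos_right hmpos).mpr hfu
    linarith
  have := hgeq θ₁ hθ₁Icc
  linarith

/-- the sets `λ·D_K`, `λ ∈ ℂ*`, are the indecomposable elements of
`𝒞_{K,ℂ}` for the operation `Conv(• ∪ •)`: if `λ·D_K = Conv(A ∪ B)` with
`A, B ∈ 𝒞_{K,ℂ}` then one of `A, B` equals `λ·D_K` and contains the other. -/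
theorem stmt14 (D : Set ℂ)
    (hDpoly : ∃ S : Finset ℂ, D = convexHull ℝ (↑S : Set ℂ))
    (hDint : (interior D).Nonempty) (hDsymm : -D = D)
    (lam : ℂ) (hlam : lam ≠ 0) (A B : Set ℂ)
    (hA : A ∈ CKC D) (hB : B ∈ CKC D)
    (h : lam • D = convexHull ℝ (A ∪ B)) :
    (A = lam • D ∧ B ⊆ A) ∨ (B = lam • D ∧ A ⊆ B) := by
  classical
  -- basic facts about D
  obtain ⟨S, hS⟩ := hDpoly
  have hDcpt : IsCompact D := by rw [hS]; exact (S.finite_toSet.isCompact_convexHull ℝ)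
  have hDcvx : Convex ℝ D := by rw [hS]; exact convex_convexHull ℝ _
  have hDne : D.Nonempty := hDint.mono interior_subset
  have hD0 : (0:ℂ) ∈ D := by
    obtain ⟨z₀, hz₀⟩ := hDne
    have hneg : -z₀ ∈ D := by
      rw [← hDsymm]; exact Set.neg_mem_neg.mpr hz₀
    have := hDcvx hz₀ hneg (by norm_num : (0:ℝ) ≤ 1/2) (by norm_num : (0:ℝ) ≤ 1/2)
      (by norm_num)
    simpa using this
  -- max norm point of D
  obtain ⟨xD, hxD, hxDmax'⟩ := hDcpt.exists_isMaxOn hDne continuous_norm.continuousOn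
  set R := ‖xD‖ with hRdef
  have hR : ∀ z ∈ D, ‖z‖ ≤ R := fun z hz => hxDmax' hz
  have hRpos : 0 < R := by
    obtain ⟨z₀, hz₀⟩ := hDint
    obtain ⟨ε, hε, hball⟩ := Metric.isOpen_iff.mp isOpen_interior z₀ hz₀
    have hw1 : z₀ + (ε/2 : ℝ) ∈ D := by
      apply interior_subset
      apply hball
      rw [Metric.mem_ball, dist_eq_norm]
      simp only [add_sub_cancel_left]
      rw [Complex.norm_real]
      rw [Real.norm_eq_abs, abs_of_pos (by positivity)]
      linarith
    have hw2 : z₀ - (ε/2 : ℝ) ∈ D := by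
      apply interior_subset
      apply hball
      rw [Metric.mem_ball, dist_eq_norm]
      simp only [sub_sub_cancel_left]
      rw [norm_neg, Complex.norm_real, Real.norm_eq_abs, abs_of_pos (by positivity)]
      linarith
    have h1 := hR _ hw1
    have h2 := hR _ hw2
    have hdiff : ‖(z₀ + (ε/2 : ℝ)) - (z₀ - (ε/2 : ℝ))‖ = ε := by
      have : (z₀ + (ε/2 : ℝ)) - (z₀ - (ε/2 : ℝ)) = ((ε : ℂ)) := by push_cast; ring
      rw [this, Complex.norm_real, Real.norm_eq_abs, abs_of_pos hε]
    have htri := norm_sub_le (z₀ + (ε/2 : ℝ)) (z₀ - (ε/2 : ℝ))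
    rw [hdiff] at htri
    linarith
  have hphiD : 0 ≤ phi D := phi_nonneg hDcpt hD0
  -- the invariant set
  set TT : Set (Set ℂ) := {C | C = ∅ ∨ (C.Nonempty ∧ IsCompact C ∧ Convex ℝ C ∧
      ∀ x ∈ C, ‖x‖ * phi D ≤ R * phi C)} with hTT
  have hTTmem : TT ∈ {T : Set (Set ℂ) | {C : Set ℂ | ∃ h : ℂ, C = h • D} ⊆ T ∧ ∅ ∈ T ∧
      {(0 : ℂ)} ∈ T ∧ (∀ A ∈ T, ∀ B ∈ T, convexHull ℝ (A ∪ B) ∈ T) ∧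
      (∀ A ∈ T, ∀ B ∈ T, A + B ∈ T)} := by
    refine ⟨?_, ?_, ?_, ?_, ?_⟩
    · -- generators
      rintro C ⟨hc, rfl⟩
      by_cases h0 : hc = 0
      · subst h0
        rw [Set.zero_smul_set hDne, ← Set.singleton_zero]
        right
        refine ⟨⟨0, rfl⟩, isCompact_singleton, convex_singleton 0, ?_⟩
        intro x hx
        rw [Set.mem_singleton_iff] at hx
        subst hx
        rw [phi_singleton_zero]
        simp
      · right
        refine ⟨hDne.smul_set, isCompact_smul_set hDcpt hc, ?_, ?_⟩
        · have : hc • D = (LinearMap.mulLeft ℝ hc) '' D := by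
            ext z; simp [Set.mem_smul_set, smul_eq_mul, LinearMap.mulLeft_apply]
          rw [this]
          exact hDcvx.linear_image _
        · intro x hx
          rw [Set.mem_smul_set] at hx
          obtain ⟨d, hd, rfl⟩ := hx
          rw [phi_smul hDcpt hDne]
          have h1 : ‖hc • d‖ = ‖hc‖ * ‖d‖ := by
            rw [smul_eq_mul]
            simp [map_mul]
          rw [h1]
          have h2 : ‖d‖ ≤ R := hR d hd
          have h3 := mul_le_mul_of_nonneg_left (mul_le_mul_of_nonneg_right h2 hphiD)
            (norm_nonneg hc)
          calc ‖hc‖ * ‖d‖ * phi D = ‖hc‖ * (‖d‖ * phi D) := by ring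
            _ ≤ ‖hc‖ * (R * phi D) := h3
            _ = R * (‖hc‖ * phi D) := by ring
    · left; rfl
    · right
      refine ⟨⟨0, rfl⟩, isCompact_singleton, convex_singleton 0, ?_⟩
      intro x hx
      rw [Set.mem_singleton_iff] at hx
      subst hx
      rw [phi_singleton_zero]
      simp
    · -- convex hull of union
      rintro A' (rfl | ⟨hAne, hAcpt, hAcvx, hAineq⟩) B' hB'
      · rcases hB' with rfl | ⟨hBne, hBcpt, hBcvx, hBineq⟩
        · left; simp
        · right
          rw [Set.empty_union, hBcvx.convexHull_eq]
          exact ⟨hBne, hBcpt, hBcvx, hBineq⟩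
      · rcases hB' with rfl | ⟨hBne, hBcpt, hBcvx, hBineq⟩
        · right
          rw [Set.union_empty, hAcvx.convexHull_eq]
          exact ⟨hAne, hAcpt, hAcvx, hAineq⟩
        · right
          have hUcpt : IsCompact (A' ∪ B') := hAcpt.union hBcpt
          have hCcpt : IsCompact (convexHull ℝ (A' ∪ B')) :=
            isCompact_convexHull_union hAcpt hBcpt hAcvx hBcvx hAne hBne
          have hCne : (convexHull ℝ (A' ∪ B')).Nonempty :=
            hAne.mono ((Set.subset_union_left).trans (subset_convexHull ℝ _))
          refine ⟨hCne, hCcpt, convex_convexHull ℝ _, ?_⟩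
          intro x hx
          obtain ⟨y₀, hy₀, hy₀max'⟩ := hUcpt.exists_isMaxOn (hAne.mono Set.subset_union_left)
            continuous_norm.continuousOn
          have hy₀max : ∀ z ∈ A' ∪ B', ‖z‖ ≤ ‖y₀‖ := fun z hz => hy₀max' hz
          have hxle : ‖x‖ ≤ ‖y₀‖ := by
            have hsub : convexHull ℝ (A' ∪ B') ⊆ Metric.closedBall 0 ‖y₀‖ := by
              apply convexHull_min _ (convex_closedBall _ _)
              intro z hz
              rw [Metric.mem_closedBall, dist_zero_right]
              exact hy₀max z hz
            have := hsub hx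
            rwa [Metric.mem_closedBall, dist_zero_right] at this
          rcases hy₀ with hy₀A | hy₀B
          · calc ‖x‖ * phi D ≤ ‖y₀‖ * phi D := mul_le_mul_of_nonneg_right hxle hphiD
              _ ≤ R * phi A' := hAineq y₀ hy₀A
              _ ≤ R * phi (convexHull ℝ (A' ∪ B')) := by
                  apply mul_le_mul_of_nonneg_left _ hRpos.le
                  exact phi_mono hAcpt hAne hCcpt hCne
                    ((Set.subset_union_left).trans (subset_convexHull ℝ _))
          · calc ‖x‖ * phi D ≤ ‖y₀‖ * phi D := mul_le_mul_of_nonneg_right hxle hphiD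
              _ ≤ R * phi B' := hBineq y₀ hy₀B
              _ ≤ R * phi (convexHull ℝ (A' ∪ B')) := by
                  apply mul_le_mul_of_nonneg_left _ hRpos.le
                  exact phi_mono hBcpt hBne hCcpt hCne
                    ((Set.subset_union_right).trans (subset_convexHull ℝ _))
    · -- Minkowski sum
      rintro A' (rfl | ⟨hAne, hAcpt, hAcvx, hAineq⟩) B' hB'
      · left; simp
      · rcases hB' with rfl | ⟨hBne, hBcpt, hBcvx, hBineq⟩
        · left; simp
        · right
          refine ⟨hAne.add hBne, hAcpt.add hBcpt, hAcvx.add hBcvx, ?_⟩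
          intro x hx
          rw [Set.mem_add] at hx
          obtain ⟨a, ha, b, hb, rfl⟩ := hx
          rw [phi_add hAcpt hAne hBcpt hBne]
          calc ‖a + b‖ * phi D ≤ (‖a‖ + ‖b‖) * phi D :=
              mul_le_mul_of_nonneg_right (norm_add_le a b) hphiD
            _ = ‖a‖ * phi D + ‖b‖ * phi D := by ring
            _ ≤ R * phi A' + R * phi B' := add_le_add (hAineq a ha) (hBineq b hb)
            _ = R * (phi A' + phi B') := by ring
  -- A and B belong to TT
  have hA' : A ∈ TT := hA TT hTTmem
  have hB' : B ∈ TT := hB TT hTTmem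
  -- the max norm point of lam • D
  set x : ℂ := lam * xD with hxdef
  have hxmem : x ∈ lam • D := ⟨xD, hxD, rfl⟩
  have hxn : ‖x‖ = ‖lam‖ * R := by
    rw [hxdef]
    simp [map_mul, hRdef]
  have hrpos : 0 < ‖lam‖ * R := by
    have := norm_pos_iff.mpr hlam
    positivity
  have hsubAB : A ∪ B ⊆ lam • D := by
    rw [h]; exact subset_convexHull ℝ _
  have hABle : ∀ z ∈ A ∪ B, ‖z‖ ≤ ‖lam‖ * R := by
    intro z hz
    obtain ⟨d, hd, rfl⟩ := Set.mem_smul_set.mp (hsubAB hz)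
    rw [smul_eq_mul]
    rw [norm_mul]
    exact mul_le_mul_of_nonneg_left (hR d hd) (norm_nonneg lam)
  have hxhull : x ∈ convexHull ℝ (A ∪ B) := by rw [← h]; exact hxmem
  have hxAB : x ∈ A ∪ B := mem_of_norm_eq_max hrpos hABle hxhull hxn
  -- conclude
  have hDsub : ∀ C : Set ℂ, C ∈ TT → x ∈ C → C ⊆ lam • D → C = lam • D := by
    intro C hC hxC hCsub
    rcases hC with rfl | ⟨hCne, hCcpt, hCcvx, hCineq⟩
    · exact absurd hxC (Set.notMem_empty x)
    · exact main_aux D hDcpt hDne R hRpos hR lam hlam C hCcpt hCcvx hCsub x hxC hxn hCineq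
  rcases hxAB with hxA | hxB
  · left
    have hAsub : A ⊆ lam • D := (Set.subset_union_left).trans hsubAB
    have hAeq := hDsub A hA' hxA hAsub
    refine ⟨hAeq, ?_⟩
    rw [hAeq]
    exact (Set.subset_union_right).trans hsubAB
  · right
    have hBsub : B ⊆ lam • D := (Set.subset_union_right).trans hsubAB
    have hBeq := hDsub B hB' hxB hBsub
    refine ⟨hBeq, ?_⟩
    rw [hBeq]
    exact (Set.subset_union_left).trans hsubAB
end

section
/- Let $\mathcal{C}_{\mathbb{Z}[\imath]}$ be the semiring of $\imath$-symmetric convex polygons with center 0, nonempty interior and vertices in $\mathbb{Z}[\imath]$ (together with $\emptyset$ and $\{0\}$), with operations convex hull of union and Minkowski sum. The map $\Phi$ sending a polygon $C$ with vertex set $\Sigma_C$ to the function $[1,\imath] \ni x + \imath y \mapsto \max_{(a,b) \in \Sigma_C} (ax + by) \in \mathbb{R}_{\max}$ (restricted support function), with $\Phi(\emptyset) \equiv -\infty$, is a semiring isomorphism from $(\mathcal{C}_{\mathbb{Z}[\imath]}, \mathrm{Conv}(\bullet \cup \bullet), +)$ onto $(\mathcal{F}_{\mathbb{Z}[\imath]},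 \max, +)$. -/
open Pointwise

/-- The segment `[1, i] = {1 - t + i t : t ∈ [0,1]}` in `ℂ`. -/
def Seg : Set ℂ := {z : ℂ | ∃ t : ℝ, 0 ≤ t ∧ t ≤ 1 ∧ z = 1 - t + t * Complex.I}

/-- The (restricted) support function of a subset `C ⊆ ℂ`: the function on the segment
`[1, i]` given by `x + i y ↦ sup_{(a,b) ∈ C} (a x + b y)`, with values in
`ℝ ∪ {±∞}`; for a convex polygon this is `max_{(a,b) ∈ Σ_C} (a x + b y)` over the vertex
set `Σ_C`, and `Φ ∅ ≡ -∞`. -/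
noncomputable def suppFn (C : Set ℂ) : Seg → EReal :=
  fun z => ⨆ w ∈ C, (((z : ℂ).re * w.re + (z : ℂ).im * w.im : ℝ) : EReal)

/-- The semiring `𝒞_{ℤ[i]}` of `i`-symmetric convex polygons with center `0`, nonempty
interior and vertices in `ℤ[i]`, together with `∅` and `{0}`. -/
def CZi : Set (Set ℂ) :=
  {C : Set ℂ | C = ∅ ∨ C = {0} ∨
    ((∃ S : Finset ℂ,
        (↑S : Set ℂ) ⊆ {z : ℂ | ∃ a b : ℤ, z = (a : ℂ) + (b : ℂ) * Complex.I} ∧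
        C = convexHull ℝ ↑S) ∧
      (interior C).Nonempty ∧ C = -C ∧ Complex.I • C = C)}

/-- The linear functional used in `suppFn`. -/
def ellF (z w : ℂ) : ℝ := z.re * w.re + z.im * w.im

lemma ellF_linear (z : ℂ) : IsLinearMap ℝ (ellF z) := by
  constructor
  · intro u v; simp [ellF]; ring
  · intro c v; simp [ellF, Complex.smul_re, Complex.smul_im]; ring

lemma ellF_continuous (z : ℂ) : Continuous (ellF z) := by
  exact ((continuous_const.mul Complex.continuous_re).add
    (continuous_const.mul Complex.continuous_im))

lemma suppFn_eq (C : Set ℂ) (z : Seg) :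
    suppFn C z = ⨆ w ∈ C, ((ellF (z : ℂ) w : ℝ) : EReal) := rfl

lemma suppFn_hull (S : Set ℂ) : suppFn (convexHull ℝ S) = suppFn S := by
  funext z
  rw [suppFn_eq, suppFn_eq]
  refine le_antisymm ?_ ?_
  · rcases Set.eq_empty_or_nonempty S with rfl | ⟨w₀, hw₀⟩
    · simp
    obtain ⟨c, hc⟩ : ∃ c, (⨆ w ∈ S, ((ellF (z : ℂ) w : ℝ) : EReal)) = c := ⟨_, rfl⟩
    rw [hc]
    induction c using EReal.rec with
    | bot =>
      exfalso
      have := le_iSup₂ (f := fun w (_ : w ∈ S) => ((ellF (z : ℂ) w : ℝ) : EReal)) w₀ hw₀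
      rw [hc] at this
      simp at this
    | top => exact le_top
    | coe r =>
      have hsub : convexHull ℝ S ⊆ {w | ellF (z : ℂ) w ≤ r} := by
        apply convexHull_min
        · intro w hw
          have := le_iSup₂ (f := fun w (_ : w ∈ S) => ((ellF (z : ℂ) w : ℝ) : EReal)) w hw
          rw [hc] at this
          exact EReal.coe_le_coe_iff.mp this
        · exact convex_halfSpace_le (ellF_linear _) r
      refine iSup₂_le fun w hw => ?_
      exact EReal.coe_le_coe_iff.mpr (hsub hw)
  · exact iSup₂_le fun w hw =>
      le_iSup₂_of_le w (subset_convexHull ℝ S hw) le_rfl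

lemma czi_props {A : Set ℂ} (hA : A ∈ CZi) :
    A = ∅ ∨ (A.Nonempty ∧ Convex ℝ A ∧ IsCompact A ∧
      (∀ w ∈ A, Complex.I * w ∈ A)) := by
  rcases hA with rfl | rfl | ⟨⟨S, _, rfl⟩, hint, _, hI⟩
  · exact Or.inl rfl
  · exact Or.inr ⟨⟨0, rfl⟩, convex_singleton 0, isCompact_singleton,
      fun w hw => by simp_all⟩
  · refine Or.inr ⟨?_, convex_convexHull ℝ _, (S.finite_toSet.isCompact_convexHull ℝ), ?_⟩
    · obtain ⟨x, hx⟩ := hint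
      exact ⟨x, interior_subset hx⟩
    · intro w hw
      have : Complex.I * w ∈ Complex.I • convexHull ℝ (↑S : Set ℂ) :=
        ⟨w, hw, rfl⟩
      rwa [hI] at this

lemma czi_pow {A : Set ℂ} (hA : A ∈ CZi)
    (hI : ∀ w ∈ A, Complex.I * w ∈ A) (k : ℕ) :
    ∀ w ∈ A, Complex.I ^ k * w ∈ A := by
  induction k with
  | zero => intro w hw; simpa using hw
  | succ n ih =>
    intro w hw
    have := hI _ (ih w hw)
    rw [← mul_assoc] at this
    rw [pow_succ, mul_comm (Complex.I ^ n) Complex.I]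
    exact this

lemma seg_mem (x y : ℝ) (hx : 0 ≤ x) (hy : 0 ≤ y) (hxy : x + y = 1) :
    ((x : ℂ) + (y : ℂ) * Complex.I) ∈ Seg := by
  refine ⟨y, hy, by linarith, ?_⟩
  have : (x : ℂ) = 1 - y := by
    have : x = 1 - y := by linarith
    rw [this]; push_cast; ring
  rw [this]

/-- Direction lemma: every nonzero direction `(a,b)` is, up to positive scaling, of the
form `z ↦ ellF z (I^k * ·)` for some `z` in the segment and `k ≤ 3`. -/
lemma direction (a b : ℝ) (hab : a ≠ 0 ∨ b ≠ 0) :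
    ∃ z ∈ Seg, ∃ k : ℕ, k ≤ 3 ∧ ∃ s : ℝ, 0 < s ∧
      ∀ w : ℂ, ellF z (Complex.I ^ k * w) = s⁻¹ * (a * w.re + b * w.im) := by
  have hs : 0 < |a| + |b| := by
    rcases hab with h | h
    · have := abs_pos.mpr h; positivity
    · have := abs_pos.mpr h; positivity
  set s := |a| + |b| with hsdef
  rcases le_or_gt 0 a with ha | ha <;> rcases le_or_gt 0 b with hb | hb
  · -- a ≥ 0, b ≥ 0 : k = 0, x = a/s, y = b/s
    refine ⟨(a/s : ℝ) + (b/s : ℝ) * Complex.I,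
      seg_mem _ _ (div_nonneg (by linarith) hs.le) (div_nonneg (by linarith) hs.le)
        (by rw [← add_div, div_eq_one_iff_eq hs.ne', hsdef,
              abs_of_nonneg ha, abs_of_nonneg hb]),
      0, by norm_num, s, hs, ?_⟩
    intro w
    simp [ellF, Complex.add_re, Complex.add_im, Complex.mul_re, Complex.mul_im]
    field_simp
    try ring
  · -- a ≥ 0, b < 0 : k = 1, coefficients (y, -x), x = -b/s, y = a/s
    refine ⟨(-b/s : ℝ) + (a/s : ℝ) * Complex.I,
      seg_mem _ _ (div_nonneg (by linarith) hs.le) (div_nonneg (by linarith) hs.le)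
        (by rw [← add_div, div_eq_one_iff_eq hs.ne', hsdef,
              abs_of_nonneg ha, abs_of_neg hb]; try ring),
      1, by norm_num, s, hs, ?_⟩
    intro w
    simp [ellF, Complex.add_re, Complex.add_im, Complex.mul_re, Complex.mul_im]
    field_simp
    try ring
  · -- a < 0, b ≥ 0 : k = 3, coefficients (-y, x), x = b/s, y = -a/s
    refine ⟨(b/s : ℝ) + (-a/s : ℝ) * Complex.I,
      seg_mem _ _ (div_nonneg (by linarith) hs.le) (div_nonneg (by linarith) hs.le)
        (by rw [← add_div, div_eq_one_iff_eq hs.ne', hsdef,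
              abs_of_neg ha, abs_of_nonneg hb]; try ring),
      3, by norm_num, s, hs, ?_⟩
    intro w
    simp [ellF, Complex.add_re, Complex.add_im, Complex.mul_re, Complex.mul_im, pow_succ]
    field_simp
    try ring
  · -- a < 0, b < 0 : k = 2, coefficients (-x, -y), x = -a/s, y = -b/s
    refine ⟨(-a/s : ℝ) + (-b/s : ℝ) * Complex.I,
      seg_mem _ _ (div_nonneg (by linarith) hs.le) (div_nonneg (by linarith) hs.le)
        (by rw [← add_div, div_eq_one_iff_eq hs.ne', hsdef,
              abs_of_neg ha, abs_of_neg hb]; try ring),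
      2, by norm_num, s, hs, ?_⟩
    intro w
    simp [ellF, Complex.add_re, Complex.add_im, Complex.mul_re, Complex.mul_im, pow_succ]
    field_simp
    try ring

lemma clm_repr (f : ℂ →L[ℝ] ℝ) (v : ℂ) :
    f v = f 1 * v.re + f Complex.I * v.im := by
  have hv : v = v.re • (1 : ℂ) + v.im • Complex.I := by
    simp [Complex.real_smul, Complex.re_add_im]
  conv_lhs => rw [hv]
  rw [map_add, map_smul, map_smul, smul_eq_mul, smul_eq_mul]
  ring

lemma one_mem_seg : (1 : ℂ) ∈ Seg := ⟨0, le_refl 0, zero_le_one, by norm_num⟩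

/-- Reconstruction: an element of `CZi` is determined by its restricted support
function, thanks to the symmetries and the Hahn-Banach separation theorem. -/
lemma recon_eq {A : Set ℂ} (hA : A ∈ CZi) :
    {w : ℂ | ∀ z : Seg, ∀ k : ℕ,
      ((ellF (z : ℂ) (Complex.I ^ k * w) : ℝ) : EReal) ≤ suppFn A z} = A := by
  ext w
  constructor
  · intro hw
    rcases czi_props hA with rfl | ⟨⟨a₀, ha₀⟩, hconv, hcomp, hI⟩
    · exfalso
      have h1 := hw ⟨1, one_mem_seg⟩ 0
      rw [suppFn_eq] at h1
      simp at h1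
    by_contra hwA
    obtain ⟨f, u, hfu, huw⟩ := geometric_hahn_banach_closed_point hconv hcomp.isClosed hwA
    have hab : f 1 ≠ 0 ∨ f Complex.I ≠ 0 := by
      by_contra h
      push_neg at h
      have h0 : ∀ v, f v = 0 := fun v => by rw [clm_repr f v, h.1, h.2]; ring
      have h1 := hfu a₀ ha₀
      rw [h0] at h1
      have h2 := huw
      rw [h0] at h2
      linarith
    obtain ⟨z, hz, k, hk3, s, hs, hform⟩ := direction (f 1) (f Complex.I) hab
    have hIpow := czi_pow hA hI
    have hsup : suppFn A ⟨z, hz⟩ ≤ ((s⁻¹ * u : ℝ) : EReal) := by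
      rw [suppFn_eq]
      refine iSup₂_le fun v hv => ?_
      rw [EReal.coe_le_coe_iff]
      have hv' : Complex.I ^ (4 - k) * v ∈ A := hIpow (4 - k) v hv
      have hvv : Complex.I ^ k * (Complex.I ^ (4 - k) * v) = v := by
        rw [← mul_assoc, ← pow_add]
        have h4 : k + (4 - k) = 4 := by omega
        rw [h4]
        norm_num [pow_succ]
      have heq := hform (Complex.I ^ (4 - k) * v)
      rw [hvv] at heq
      rw [heq, ← clm_repr]
      exact mul_le_mul_of_nonneg_left (hfu _ hv').le (inv_pos.mpr hs).le
    have hlt : ((s⁻¹ * u : ℝ) : EReal) < ((ellF z (Complex.I ^ k * w) : ℝ) : EReal) := by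
      rw [EReal.coe_lt_coe_iff, hform w, ← clm_repr]
      exact mul_lt_mul_of_pos_left huw (inv_pos.mpr hs)
    exact absurd ((hw ⟨z, hz⟩ k).trans hsup) (not_le.mpr hlt)
  · intro hwA z k
    rcases czi_props hA with rfl | ⟨_, _, _, hI⟩
    · simp at hwA
    rw [suppFn_eq]
    exact le_iSup₂ (f := fun v (_ : v ∈ A) => ((ellF (z : ℂ) v : ℝ) : EReal))
      (Complex.I ^ k * w) (czi_pow hA hI k w hwA)

lemma suppFn_empty (z : Seg) : suppFn (∅ : Set ℂ) z = ⊥ := by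
  rw [suppFn_eq]; simp

/-- the map `Φ` sending a polygon to its restricted support function is a
semiring isomorphism from `(𝒞_{ℤ[i]}, Conv(• ∪ •), +)` onto
`(𝓕_{ℤ[i]}, max, +) = (Φ''(𝒞_{ℤ[i]}), max, +)`. -/
theorem stmt16 :
    Set.BijOn suppFn CZi (suppFn '' CZi) ∧
    (∀ A ∈ CZi, ∀ B ∈ CZi,
      suppFn (convexHull ℝ (A ∪ B)) = fun z => max (suppFn A z) (suppFn B z)) ∧
    (∀ A ∈ CZi, ∀ B ∈ CZi,
      suppFn (A + B) = fun z => suppFn A z + suppFn B z) := by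
  refine ⟨⟨fun x hx => ⟨x, hx, rfl⟩, ?_, Set.surjOn_image _ _⟩, ?_, ?_⟩
  · -- injectivity
    intro A hA B hB h
    rw [← recon_eq hA, ← recon_eq hB, h]
  · -- max
    intro A hA B hB
    funext z
    rw [suppFn_hull, suppFn_eq, suppFn_eq, suppFn_eq, iSup_union]
  · -- add
    intro A hA B hB
    funext z
    show suppFn (A + B) z = suppFn A z + suppFn B z
    rcases czi_props hA with rfl | ⟨hAne, _, hAt, _⟩
    · rw [Set.empty_add, suppFn_empty, EReal.bot_add]
    rcases czi_props hB with rfl | ⟨hBne, _, hBt, _⟩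
    · rw [Set.add_empty, suppFn_empty, EReal.add_bot]
    obtain ⟨a₀, ha₀, hamax⟩ := hAt.exists_isMaxOn hAne (ellF_continuous (z : ℂ)).continuousOn
    obtain ⟨b₀, hb₀, hbmax⟩ := hBt.exists_isMaxOn hBne (ellF_continuous (z : ℂ)).continuousOn
    have hA0 : suppFn A z = ((ellF (z : ℂ) a₀ : ℝ) : EReal) := by
      rw [suppFn_eq]
      refine le_antisymm (iSup₂_le fun v hv => EReal.coe_le_coe_iff.mpr (hamax hv)) ?_
      exact le_iSup₂ (f := fun v (_ : v ∈ A) => ((ellF (z : ℂ) v : ℝ) : EReal)) a₀ ha₀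
    have hB0 : suppFn B z = ((ellF (z : ℂ) b₀ : ℝ) : EReal) := by
      rw [suppFn_eq]
      refine le_antisymm (iSup₂_le fun v hv => EReal.coe_le_coe_iff.mpr (hbmax hv)) ?_
      exact le_iSup₂ (f := fun v (_ : v ∈ B) => ((ellF (z : ℂ) v : ℝ) : EReal)) b₀ hb₀
    have hAB : suppFn (A + B) z = ((ellF (z : ℂ) a₀ + ellF (z : ℂ) b₀ : ℝ) : EReal) := by
      rw [suppFn_eq]
      refine le_antisymm (iSup₂_le fun v hv => ?_) ?_
      · obtain ⟨x, hx, y, hy, rfl⟩ := Set.mem_add.mp hv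
        rw [EReal.coe_le_coe_iff, (ellF_linear (z : ℂ)).map_add]
        exact add_le_add (hamax hx) (hbmax hy)
      · refine le_iSup₂_of_le (a₀ + b₀) (Set.add_mem_add ha₀ hb₀) ?_
        rw [(ellF_linear (z : ℂ)).map_add]
    rw [hAB, hA0, hB0, ← EReal.coe_add]
end

section
/- Let $M, N$ be idempotent commutative monoids ($\mathbb{B}$-modules) which are also idempotent semirings with second operation $+$. On the tensor product $M \otimes_{\mathbb{B}} N$ of $\mathbb{B}$-modules, the operation defined on elementary tensors by $(a \otimes b) + (a' \otimes b') := (a + a') \otimes (b + b')$ extends to a well-defined associative, commutative operation making $M \otimes_{\mathbb{B}} N$ an idempotent semiring. -/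
universe u

/-- Evaluation of a finite formal sum `∑ eᵢ ⊗ fᵢ` (a multiset of pairs) under a map
`ψ : M → N → P`. -/
def evalSum {M N P : Type u} [AddCommMonoid P] (ψ : M → N → P)
    (s : Multiset (M × N)) : P :=
  (s.map fun p => ψ p.1 p.2).sum

/-- Two finite formal sums represent the same element of the tensor product
`M ⊗_𝔹 N` iff every `𝔹`-bilinear map into any `𝔹`-module (idempotent commutative
monoid) takes the same value on them. -/
def tensorRel (M N : Type u) [CommSemiring M] [CommSemiring N]
    (s t : Multiset (M × N)) : Prop :=
  ∀ (P : Type u) [AddCommMonoid P], (∀ x : P, x + x = x) →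
    ∀ ψ : M → N → P,
      (∀ a a' b, ψ (a + a') b = ψ a b + ψ a' b) →
      (∀ a b b', ψ a (b + b') = ψ a b + ψ a b') →
      evalSum ψ s = evalSum ψ t

/-- The product of two formal sums, defined on elementary tensors by
`(a ⊗ b) · (a' ⊗ b') = (a * a') ⊗ (b * b')` (the operation written `+` in the paper). -/
def tensorMul {M N : Type u} [CommSemiring M] [CommSemiring N]
    (s t : Multiset (M × N)) : Multiset (M × N) :=
  s.bind fun p => t.map fun q => (p.1 * q.1, p.2 * q.2)

lemma evalSum_tensorMul {M N P : Type u} [CommSemiring M] [CommSemiring N]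
    [AddCommMonoid P] (ψ : M → N → P) (s t : Multiset (M × N)) :
    evalSum ψ (tensorMul s t)
      = evalSum (fun a b => evalSum (fun a' b' => ψ (a * a') (b * b')) t) s := by
  simp [evalSum, tensorMul, Multiset.map_bind, Multiset.sum_bind, Multiset.map_map,
    Function.comp]

lemma tensorRel_of_eq {M N : Type u} [CommSemiring M] [CommSemiring N]
    {s t : Multiset (M × N)} (h : s = t) : tensorRel M N s t := by
  intro P _ _ ψ _ _; rw [h]

/-- for `M, N` idempotent commutative monoids (`𝔹`-modules) which are also
idempotent semirings (second operation `+` of the paper, written `*` here), the operation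
`(a ⊗ b) + (a' ⊗ b') := (a + a') ⊗ (b + b')` extends to a well-defined associative,
commutative operation on `M ⊗_𝔹 N`, making it an idempotent semiring. -/
theorem stmt19 {M N : Type u} [CommSemiring M] [CommSemiring N]
    (hM : ∀ a : M, a + a = a) (hN : ∀ b : N, b + b = b) :
    -- the operation on elementary tensors
    (∀ (a a' : M) (b b' : N),
      tensorMul ({(a, b)} : Multiset (M × N)) {(a', b')} = {(a * a', b * b')}) ∧
    -- well-definedness: compatibility with the tensor relation
    (∀ s s' t t' : Multiset (M × N), tensorRel M N s s' → tensorRel M N t t' →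
      tensorRel M N (tensorMul s t) (tensorMul s' t')) ∧
    -- commutativity and associativity
    (∀ s t : Multiset (M × N), tensorRel M N (tensorMul s t) (tensorMul t s)) ∧
    (∀ s t u : Multiset (M × N),
      tensorRel M N (tensorMul (tensorMul s t) u) (tensorMul s (tensorMul t u))) ∧
    -- neutral element `1 ⊗ 1`
    (∀ s : Multiset (M × N), tensorRel M N (tensorMul s {(1, 1)}) s) ∧
    -- distributivity over the idempotent addition `⊕` (multiset union)
    (∀ s t u : Multiset (M × N),
      tensorRel M N (tensorMul s (t + u)) (tensorMul s t + tensorMul s u)) ∧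
    -- the addition of `M ⊗_𝔹 N` is idempotent
    (∀ s : Multiset (M × N), tensorRel M N (s + s) s) := by
  refine ⟨?_, ?_, ?_, ?_, ?_, ?_, ?_⟩
  · intro a a' b b'
    simp [tensorMul]
  · -- well-definedness
    intro s s' t t' hs ht P _ hP ψ hl hr
    have hstep : ∀ (u : Multiset (M × N)),
        evalSum ψ (tensorMul u t) = evalSum ψ (tensorMul u t') := by
      intro u
      rw [evalSum_tensorMul, evalSum_tensorMul]
      congr 1
      funext a b
      exact ht P hP (fun a' b' => ψ (a * a') (b * b'))
        (fun x y z => by simp only [mul_add, hl])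
        (fun x y z => by simp only [mul_add, hr])
    calc evalSum ψ (tensorMul s t) = evalSum ψ (tensorMul s t') := hstep s
      _ = evalSum ψ (tensorMul s' t') := by
          rw [evalSum_tensorMul, evalSum_tensorMul]
          refine hs P hP _ ?_ ?_
          · intro a a' b
            simp only [evalSum, add_mul, mul_add]
            rw [← Multiset.sum_map_add]
            exact congrArg _ (Multiset.map_congr rfl fun q _ => hl _ _ _)
          · intro a b b'
            simp only [evalSum, add_mul]
            rw [← Multiset.sum_map_add]
            exact congrArg _ (Multiset.map_congr rfl fun q _ => hr _ _ _)
  · -- commutativity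
    intro s t
    apply tensorRel_of_eq
    rw [tensorMul, tensorMul, Multiset.bind_map_comm]
    exact Multiset.bind_congr fun x _ => Multiset.map_congr rfl fun p _ => by
      rw [mul_comm p.1, mul_comm p.2]
  · -- associativity
    intro s t u
    apply tensorRel_of_eq
    simp only [tensorMul, Multiset.bind_assoc, Multiset.map_bind, Multiset.bind_map,
      Multiset.map_map, Function.comp_def, mul_assoc]
  · -- neutral element
    intro s
    apply tensorRel_of_eq
    have key : ∀ v : Multiset (M × N), (v.bind fun p => ({p} : Multiset (M × N))) = v := by
      intro v
      induction v using Multiset.induction with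
      | empty => simp
      | cons a v ih => simp [ih]
    simpa [tensorMul] using key s
  · -- distributivity
    intro s t u
    apply tensorRel_of_eq
    simp only [tensorMul, Multiset.map_add]
    exact Multiset.bind_add ..
  · -- idempotency of addition
    intro s P _ hP ψ _ _
    simp only [evalSum, Multiset.map_add, Multiset.sum_add]
    exact hP _
end
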